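/- arXiv:2309.02014 — 9 statements merged into one kernel-verified Lean document; each statement's English description precedes it below -/
import Mathlib

section
/- Let F : ℝ^p → ℝ be twice differentiable, L-smooth and μ-strongly convex on a closed convex set C with 0 < μ ≤ L. Then F is quadratically regular on C and its quadratic regularity constants satisfy μ/L ≤ γ_ℓ(C) ≤ γ_u(C) ≤ L/μ. -/
open Matrix

noncomputable section

lemma aux_taylor (φ ψ r : ℝ → ℝ) (hφ : ∀ t, HasDerivAt φ (ψ t) t)
    (hψ : ∀ t, HasDerivAt ψ (r t) t) (b : ℝ)
    (hb : ∀ t ∈ Set.Icc (0:ℝ) 1, r t ≤ b) : φ 1 ≤ φ 0 + ψ 0 + b / 2 := by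
  have hψc : Continuous ψ := continuous_iff_continuousAt.mpr fun t => (hψ t).continuousAt
  have hφc : Continuous φ := continuous_iff_continuousAt.mpr fun t => (hφ t).continuousAt
  have h1 : MonotoneOn (fun t => t * b - ψ t) (Set.Icc 0 1) := by
    apply monotoneOn_of_hasDerivWithinAt_nonneg (f' := fun t => b - r t) (convex_Icc 0 1)
      (((continuous_id.mul continuous_const).sub hψc).continuousOn)
    · intro x hx
      have h := ((hasDerivAt_id x).mul_const b).sub (hψ x)
      rw [one_mul] at h
      exact h.hasDerivWithinAt
    · intro x hx
      rw [interior_Icc] at hx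
      exact sub_nonneg.2 (hb x (Set.Ioo_subset_Icc_self hx))
  have hψle : ∀ t ∈ Set.Icc (0:ℝ) 1, ψ t ≤ ψ 0 + t * b := by
    intro t ht
    have := h1 (Set.left_mem_Icc.2 zero_le_one) ht ht.1
    simp only [zero_mul, zero_sub] at this
    linarith
  have h2 : MonotoneOn (fun t => t * ψ 0 + t ^ 2 * (b / 2) - φ t) (Set.Icc 0 1) := by
    apply monotoneOn_of_hasDerivWithinAt_nonneg (f' := fun t => ψ 0 + t * b - ψ t)
      (convex_Icc 0 1)
      ((((continuous_id.mul continuous_const).add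
        ((continuous_pow 2).mul continuous_const)).sub hφc).continuousOn)
    · intro x hx
      have h := (((hasDerivAt_id x).mul_const (ψ 0)).add
        ((hasDerivAt_pow 2 x).mul_const (b / 2))).sub (hφ x)
      have he : 1 * ψ 0 + (2:ℕ) * x ^ (2 - 1) * (b / 2) - ψ x = ψ 0 + x * b - ψ x := by
        push_cast; ring
      rw [he] at h
      exact h.hasDerivWithinAt
    · intro x hx
      rw [interior_Icc] at hx
      have := hψle x (Set.Ioo_subset_Icc_self hx)
      linarith
  have := h2 (Set.left_mem_Icc.2 zero_le_one) (Set.right_mem_Icc.2 zero_le_one) zero_le_one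
  simp only [zero_mul, one_mul, one_pow, zero_pow, ne_eq, OfNat.ofNat_ne_zero,
    not_false_eq_true, zero_add, zero_sub] at this
  linarith

/-- The `A`-weighted quadratic form `‖v‖_A² = vᵀ A v`. -/
def quadForm {p : ℕ} (A : Matrix (Fin p) (Fin p) ℝ) (v : Fin p → ℝ) : ℝ :=
  v ⬝ᵥ A.mulVec v

/-- If `F` is `L`-smooth and `μ`-strongly convex on a closed convex set `C`
(`μI ⪯ ∇²F(w) ⪯ LI` on `C`), then `F` is quadratically regular on `C` with quadratic
regularity constants satisfying `μ/L ≤ γℓ(C) ≤ γu(C) ≤ L/μ`: the upper quadratic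
regularity bound holds with constant `L/μ` and the lower bound with constant `μ/L`. -/
theorem quadratic_regularity_of_smooth_strongly_convex {p : ℕ}
    (C : Set (Fin p → ℝ)) (hCconv : Convex ℝ C) (hCclosed : IsClosed C)
    (F : (Fin p → ℝ) → ℝ) (g : (Fin p → ℝ) → Fin p → ℝ)
    (H : (Fin p → ℝ) → Matrix (Fin p) (Fin p) ℝ)
    (hgrad : ∀ x, ∃ f' : (Fin p → ℝ) →L[ℝ] ℝ, HasFDerivAt F f' x ∧ ∀ v, f' v = g x ⬝ᵥ v)
    (hhess : ∀ x, ∃ g' : (Fin p → ℝ) →L[ℝ] (Fin p → ℝ),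
      HasFDerivAt g g' x ∧ ∀ v, g' v = (H x).mulVec v)
    (L μ : ℝ) (hμ : 0 < μ) (hμL : μ ≤ L)
    (hsc : ∀ w ∈ C, (H w - μ • (1 : Matrix (Fin p) (Fin p) ℝ)).PosSemidef)
    (hsm : ∀ w ∈ C, (L • (1 : Matrix (Fin p) (Fin p) ℝ) - H w).PosSemidef) :
    ∀ w₀ ∈ C, ∀ w₁ ∈ C, ∀ w₂ ∈ C,
      F w₂ ≤ F w₁ + g w₁ ⬝ᵥ (w₂ - w₁) + (L / μ) / 2 * quadForm (H w₀) (w₂ - w₁) ∧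
      F w₂ ≥ F w₁ + g w₁ ⬝ᵥ (w₂ - w₁) + (μ / L) / 2 * quadForm (H w₀) (w₂ - w₁) := by
  intro w₀ hw₀ w₁ hw₁ w₂ hw₂
  set d : Fin p → ℝ := w₂ - w₁ with hd
  set S : ℝ := d ⬝ᵥ d with hS
  have hS0 : 0 ≤ S := Finset.sum_nonneg fun i _ => mul_self_nonneg (d i)
  -- quadratic form bounds on C
  have hbound : ∀ x ∈ C, μ * S ≤ d ⬝ᵥ (H x).mulVec d ∧ d ⬝ᵥ (H x).mulVec d ≤ L * S := by
    intro x hx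
    have h1 := (hsc x hx).dotProduct_mulVec_nonneg d
    have h2 := (hsm x hx).dotProduct_mulVec_nonneg d
    simp only [star_trivial, sub_mulVec, smul_mulVec, one_mulVec, dotProduct_sub,
      dotProduct_smul, smul_eq_mul] at h1 h2
    constructor <;> [linarith; linarith]
  -- the curve
  set c : ℝ → (Fin p → ℝ) := fun t => w₁ + t • d with hc
  have hcC : ∀ t ∈ Set.Icc (0:ℝ) 1, c t ∈ C := by
    intro t ht
    have he : c t = (1 - t) • w₁ + t • w₂ := by
      simp only [hc, hd]; module
    rw [he]
    exact hCconv hw₁ hw₂ (by linarith [ht.2]) ht.1 (by ring)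
  have hcd : ∀ t : ℝ, HasDerivAt c d t := by
    intro t
    have h := ((hasDerivAt_id t).smul_const d).const_add w₁
    rw [one_smul] at h
    exact h
  set ψ : ℝ → ℝ := fun t => g (c t) ⬝ᵥ d with hψdef
  set r : ℝ → ℝ := fun t => d ⬝ᵥ (H (c t)).mulVec d with hrdef
  have hψ : ∀ t, HasDerivAt ψ (r t) t := by
    intro t
    obtain ⟨g', hg', hg'v⟩ := hhess (c t)
    have hgc : HasDerivAt (fun t => g (c t)) (g' d) t := hg'.comp_hasDerivAt t (hcd t)
    have hi : ∀ i : Fin p, HasDerivAt (fun t => g (c t) i) (g' d i) t := fun i =>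
      (ContinuousLinearMap.proj (R := ℝ) (φ := fun _ : Fin p => ℝ) i).hasFDerivAt.comp_hasDerivAt
        t hgc
    have hsum : HasDerivAt (fun t => ∑ i, g (c t) i * d i) (∑ i, g' d i * d i) t :=
      HasDerivAt.fun_sum fun i _ => (hi i).mul_const (d i)
    have he1 : (fun t => ∑ i, g (c t) i * d i) = ψ := by
      funext t; simp [hψdef, dotProduct]
    have he2 : (∑ i, g' d i * d i) = r t := by
      rw [hrdef]
      simp only [hg'v]
      rw [dotProduct_comm]
      simp [dotProduct]
    rw [he1, he2] at hsum
    exact hsum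
  have hφ : ∀ t, HasDerivAt (fun t => F (c t)) (ψ t) t := by
    intro t
    obtain ⟨f', hf', hf'v⟩ := hgrad (c t)
    have h := hf'.comp_hasDerivAt t (hcd t)
    rwa [hf'v] at h
  -- upper Taylor bound
  have hup : F (c 1) ≤ F (c 0) + ψ 0 + (L * S) / 2 := by
    apply aux_taylor _ _ r hφ hψ
    intro t ht
    exact (hbound (c t) (hcC t ht)).2
  -- lower Taylor bound
  have hlo : -F (c 1) ≤ -F (c 0) + -ψ 0 + (-(μ * S)) / 2 := by
    apply aux_taylor (fun t => -F (c t)) (fun t => -ψ t) (fun t => -r t)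
      (fun t => (hφ t).neg) (fun t => (hψ t).neg)
    intro t ht
    simp only [neg_le_neg_iff]
    exact (hbound (c t) (hcC t ht)).1
  have hc0 : c 0 = w₁ := by simp [hc]
  have hc1 : c 1 = w₂ := by simp [hc, hd]
  rw [hc0, hc1] at hup hlo
  have hψ0 : ψ 0 = g w₁ ⬝ᵥ d := by rw [hψdef]; simp [hc]
  rw [hψ0] at hup hlo
  have hQ := hbound w₀ hw₀
  have hQdef : quadForm (H w₀) d = d ⬝ᵥ (H w₀).mulVec d := rfl
  have hL0 : 0 < L := lt_of_lt_of_le hμ hμL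
  constructor
  · have h1 : (L / μ) / 2 * quadForm (H w₀) d ≥ (L / μ) / 2 * (μ * S) := by
      apply mul_le_mul_of_nonneg_left (hQdef ▸ hQ.1) (by positivity)
    have h2 : (L / μ) / 2 * (μ * S) = (L * S) / 2 := by field_simp
    linarith
  · have h1 : (μ / L) / 2 * quadForm (H w₀) d ≤ (μ / L) / 2 * (L * S) := by
      apply mul_le_mul_of_nonneg_left (hQdef ▸ hQ.2) (by positivity)
    have h2 : (μ / L) / 2 * (L * S) = (μ * S) / 2 := by field_simp
    linarith
end
end

section
/- Let F : ℝ^p → ℝ be twice differentiable and μ-strongly convex with M-Lipschitz Hessian on a compact convex set C of diameter D. Then F is quadratically regular on C with (1 + MD/μ)⁻¹ ≤ γ_ℓ(C) ≤ γ_u(C) ≤ 1 + MD/μ. -/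
open Matrix

noncomputable section

/-- The Euclidean norm of a vector in `ℝ^p`. -/
def euclNorm {p : ℕ} (v : Fin p → ℝ) : ℝ := Real.sqrt (v ⬝ᵥ v)

def dotCLM {p : ℕ} (d : Fin p → ℝ) : (Fin p → ℝ) →L[ℝ] ℝ :=
  LinearMap.toContinuousLinearMap
    { toFun := fun v => v ⬝ᵥ d
      map_add' := fun x y => add_dotProduct x y d
      map_smul' := fun c x => smul_dotProduct c x d }

@[simp] lemma dotCLM_apply {p : ℕ} (d v : Fin p → ℝ) : dotCLM d v = v ⬝ᵥ d := rfl

/-- One-dimensional Taylor-type two-sided bound. -/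
lemma taylor_bound {p : ℕ}
    (F : (Fin p → ℝ) → ℝ) (g : (Fin p → ℝ) → Fin p → ℝ)
    (H : (Fin p → ℝ) → Matrix (Fin p) (Fin p) ℝ)
    (hgrad : ∀ x, ∃ f' : (Fin p → ℝ) →L[ℝ] ℝ, HasFDerivAt F f' x ∧ ∀ v, f' v = g x ⬝ᵥ v)
    (hhess : ∀ x, ∃ g' : (Fin p → ℝ) →L[ℝ] (Fin p → ℝ),
      HasFDerivAt g g' x ∧ ∀ v, g' v = (H x).mulVec v)
    (w₁ w₂ : Fin p → ℝ) (K K' : ℝ)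
    (hK : ∀ t ∈ Set.Icc (0:ℝ) 1, quadForm (H (w₁ + t • (w₂ - w₁))) (w₂ - w₁) ≤ K)
    (hK' : ∀ t ∈ Set.Icc (0:ℝ) 1, K' ≤ quadForm (H (w₁ + t • (w₂ - w₁))) (w₂ - w₁)) :
    F w₂ ≤ F w₁ + g w₁ ⬝ᵥ (w₂ - w₁) + K / 2 ∧
    F w₁ + g w₁ ⬝ᵥ (w₂ - w₁) + K' / 2 ≤ F w₂ := by
  set d := w₂ - w₁ with hd
  set L : ℝ → (Fin p → ℝ) := fun t => w₁ + t • d with hL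
  have hL0 : L 0 = w₁ := by simp [hL]
  have hL1 : L 1 = w₂ := by simp [hL, hd]
  have hLd : ∀ t : ℝ, HasDerivAt L d t := fun t =>
    ((hasDerivAt_id t).smul_const d).const_add w₁ |>.congr_deriv (one_smul ℝ d)
  set ψ : ℝ → ℝ := fun t => g (L t) ⬝ᵥ d with hψ
  have hFψ : ∀ t : ℝ, HasDerivAt (fun t => F (L t)) (ψ t) t := by
    intro t
    obtain ⟨f', hf', hfv⟩ := hgrad (L t)
    have := hf'.comp_hasDerivAt t (hLd t)
    rwa [hfv d] at this
  have hψ' : ∀ t : ℝ, HasDerivAt ψ (quadForm (H (L t)) d) t := by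
    intro t
    obtain ⟨g', hg', hgv⟩ := hhess (L t)
    have h1 : HasDerivAt (fun t => g (L t)) (g' d) t := hg'.comp_hasDerivAt t (hLd t)
    have h2 := ((dotCLM d).hasFDerivAt.comp_hasDerivAt t h1)
    have : (dotCLM d) (g' d) = quadForm (H (L t)) d := by
      rw [dotCLM_apply, hgv d, quadForm, dotProduct_comm]
    rwa [this] at h2
  have hψ0 : ψ 0 = g w₁ ⬝ᵥ d := by simp [hψ, hL0]
  constructor
  · -- upper bound
    set h : ℝ → ℝ := fun t => ψ t - ψ 0 - K * t with hh
    have hh' : ∀ t : ℝ, HasDerivAt h (quadForm (H (L t)) d - K) t := by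
      intro t
      exact (((hψ' t).sub_const (ψ 0)).sub ((hasDerivAt_id t).const_mul K)).congr_deriv (by simp)
    have hhanti : AntitoneOn h (Set.Icc 0 1) := by
      apply antitoneOn_of_deriv_nonpos (convex_Icc 0 1)
      · exact fun t _ => (hh' t).continuousAt.continuousWithinAt
      · exact fun t _ => (hh' t).differentiableAt.differentiableWithinAt
      · intro t ht
        rw [interior_Icc] at ht
        rw [(hh' t).deriv]
        have := hK t ⟨ht.1.le, ht.2.le⟩
        linarith
    have hh0 : h 0 = 0 := by simp [hh]
    have hhle : ∀ t ∈ Set.Icc (0:ℝ) 1, h t ≤ 0 := by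
      intro t ht
      have := hhanti (Set.left_mem_Icc.2 zero_le_one) ht ht.1
      rwa [hh0] at this
    set φ : ℝ → ℝ := fun t => F (L t) - ψ 0 * t - K * t ^ 2 / 2 with hφ
    have hφ' : ∀ t : ℝ, HasDerivAt φ (h t) t := by
      intro t
      have h1 : HasDerivAt (fun t : ℝ => ψ 0 * t) (ψ 0) t := by
        simpa using (hasDerivAt_id t).const_mul (ψ 0)
      have h2 : HasDerivAt (fun t : ℝ => K * t ^ 2 / 2) (K * t) t := by
        have := ((hasDerivAt_pow 2 t).const_mul K).div_const 2
        simpa using this.congr_deriv (by ring)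
      have := ((hFψ t).sub h1).sub h2
      exact this
    have hφanti : AntitoneOn φ (Set.Icc 0 1) := by
      apply antitoneOn_of_deriv_nonpos (convex_Icc 0 1)
      · exact fun t _ => (hφ' t).continuousAt.continuousWithinAt
      · exact fun t _ => (hφ' t).differentiableAt.differentiableWithinAt
      · intro t ht
        rw [interior_Icc] at ht
        rw [(hφ' t).deriv]
        exact hhle t ⟨ht.1.le, ht.2.le⟩
    have := hφanti (Set.left_mem_Icc.2 zero_le_one) (Set.right_mem_Icc.2 zero_le_one) zero_le_one
    simp only [hφ, hL0, hL1] at this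
    rw [hψ0] at this
    nlinarith [this]
  · -- lower bound
    set h : ℝ → ℝ := fun t => ψ t - ψ 0 - K' * t with hh
    have hh' : ∀ t : ℝ, HasDerivAt h (quadForm (H (L t)) d - K') t := by
      intro t
      exact (((hψ' t).sub_const (ψ 0)).sub ((hasDerivAt_id t).const_mul K')).congr_deriv (by simp)
    have hhmono : MonotoneOn h (Set.Icc 0 1) := by
      apply monotoneOn_of_deriv_nonneg (convex_Icc 0 1)
      · exact fun t _ => (hh' t).continuousAt.continuousWithinAt
      · exact fun t _ => (hh' t).differentiableAt.differentiableWithinAt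
      · intro t ht
        rw [interior_Icc] at ht
        rw [(hh' t).deriv]
        have := hK' t ⟨ht.1.le, ht.2.le⟩
        linarith
    have hh0 : h 0 = 0 := by simp [hh]
    have hhge : ∀ t ∈ Set.Icc (0:ℝ) 1, 0 ≤ h t := by
      intro t ht
      have := hhmono (Set.left_mem_Icc.2 zero_le_one) ht ht.1
      rwa [hh0] at this
    set φ : ℝ → ℝ := fun t => F (L t) - ψ 0 * t - K' * t ^ 2 / 2 with hφ
    have hφ' : ∀ t : ℝ, HasDerivAt φ (h t) t := by
      intro t
      have h1 : HasDerivAt (fun t : ℝ => ψ 0 * t) (ψ 0) t := by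
        simpa using (hasDerivAt_id t).const_mul (ψ 0)
      have h2 : HasDerivAt (fun t : ℝ => K' * t ^ 2 / 2) (K' * t) t := by
        have := ((hasDerivAt_pow 2 t).const_mul K').div_const 2
        simpa using this.congr_deriv (by ring)
      have := ((hFψ t).sub h1).sub h2
      exact this
    have hφmono : MonotoneOn φ (Set.Icc 0 1) := by
      apply monotoneOn_of_deriv_nonneg (convex_Icc 0 1)
      · exact fun t _ => (hφ' t).continuousAt.continuousWithinAt
      · exact fun t _ => (hφ' t).differentiableAt.differentiableWithinAt
      · intro t ht
        rw [interior_Icc] at ht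
        rw [(hφ' t).deriv]
        exact hhge t ⟨ht.1.le, ht.2.le⟩
    have := hφmono (Set.left_mem_Icc.2 zero_le_one) (Set.right_mem_Icc.2 zero_le_one) zero_le_one
    simp only [hφ, hL0, hL1] at this
    rw [hψ0] at this
    nlinarith [this]
open Matrix

section Aux
variable {p : ℕ}

lemma dotProduct_self_nonneg' (v : Fin p → ℝ) : 0 ≤ v ⬝ᵥ v :=
  Finset.sum_nonneg fun i _ => mul_self_nonneg (v i)

lemma psd_dot {A : Matrix (Fin p) (Fin p) ℝ} (h : A.PosSemidef) (v : Fin p → ℝ) :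
    0 ≤ v ⬝ᵥ A.mulVec v := by simpa using h.dotProduct_mulVec_nonneg v

lemma quad_le_of_psd {A B : Matrix (Fin p) (Fin p) ℝ} {β : ℝ}
    (h : (β • (1 : Matrix (Fin p) (Fin p) ℝ) - (A - B)).PosSemidef) (v : Fin p → ℝ) :
    v ⬝ᵥ A.mulVec v ≤ v ⬝ᵥ B.mulVec v + β * (v ⬝ᵥ v) := by
  have := psd_dot h v
  rw [sub_mulVec, sub_mulVec, smul_mulVec, one_mulVec, dotProduct_sub, dotProduct_sub,
    dotProduct_smul, smul_eq_mul] at this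
  linarith

lemma quad_ge_of_psd {A B : Matrix (Fin p) (Fin p) ℝ} {β : ℝ}
    (h : ((A - B) + β • (1 : Matrix (Fin p) (Fin p) ℝ)).PosSemidef) (v : Fin p → ℝ) :
    v ⬝ᵥ B.mulVec v ≤ v ⬝ᵥ A.mulVec v + β * (v ⬝ᵥ v) := by
  have := psd_dot h v
  rw [add_mulVec, sub_mulVec, smul_mulVec, one_mulVec, dotProduct_add, dotProduct_sub,
    dotProduct_smul, smul_eq_mul] at this
  linarith

lemma quad_mu_le {A : Matrix (Fin p) (Fin p) ℝ} {μ : ℝ}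
    (h : (A - μ • (1 : Matrix (Fin p) (Fin p) ℝ)).PosSemidef) (v : Fin p → ℝ) :
    μ * (v ⬝ᵥ v) ≤ v ⬝ᵥ A.mulVec v := by
  have := psd_dot h v
  rw [sub_mulVec, smul_mulVec, one_mulVec, dotProduct_sub, dotProduct_smul,
    smul_eq_mul] at this
  linarith
end Aux

/-- If `F` is `μ`-strongly convex (`∇²F ⪰ μI`) with `M`-Lipschitz Hessian
(`−M‖w−w'‖ I ⪯ ∇²F(w) − ∇²F(w') ⪯ M‖w−w'‖ I`) on a compact convex set `C` of diameter `D`,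
then `F` is quadratically regular on `C` with
`(1 + MD/μ)⁻¹ ≤ γℓ(C) ≤ γu(C) ≤ 1 + MD/μ`: the upper quadratic regularity bound holds with
constant `1 + MD/μ` and the lower bound with constant `(1 + MD/μ)⁻¹`. -/
theorem quadratic_regularity_of_lipschitz_hessian {p : ℕ}
    (C : Set (Fin p → ℝ)) (hCcompact : IsCompact C) (hCconv : Convex ℝ C)
    (F : (Fin p → ℝ) → ℝ) (g : (Fin p → ℝ) → Fin p → ℝ)
    (H : (Fin p → ℝ) → Matrix (Fin p) (Fin p) ℝ)
    (hgrad : ∀ x, ∃ f' : (Fin p → ℝ) →L[ℝ] ℝ, HasFDerivAt F f' x ∧ ∀ v, f' v = g x ⬝ᵥ v)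
    (hhess : ∀ x, ∃ g' : (Fin p → ℝ) →L[ℝ] (Fin p → ℝ),
      HasFDerivAt g g' x ∧ ∀ v, g' v = (H x).mulVec v)
    (μ M D : ℝ) (hμ : 0 < μ) (hM : 0 < M) (hD : 0 ≤ D)
    (hdiam : ∀ w ∈ C, ∀ w' ∈ C, euclNorm (w - w') ≤ D)
    (hsc : ∀ w ∈ C, (H w - μ • (1 : Matrix (Fin p) (Fin p) ℝ)).PosSemidef)
    (hLip : ∀ w ∈ C, ∀ w' ∈ C,
      ((M * euclNorm (w - w')) • (1 : Matrix (Fin p) (Fin p) ℝ) - (H w - H w')).PosSemidef ∧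
      ((H w - H w') + (M * euclNorm (w - w')) • (1 : Matrix (Fin p) (Fin p) ℝ)).PosSemidef) :
    ∀ w₀ ∈ C, ∀ w₁ ∈ C, ∀ w₂ ∈ C,
      F w₂ ≤ F w₁ + g w₁ ⬝ᵥ (w₂ - w₁) + (1 + M * D / μ) / 2 * quadForm (H w₀) (w₂ - w₁) ∧
      F w₂ ≥ F w₁ + g w₁ ⬝ᵥ (w₂ - w₁) + (1 + M * D / μ)⁻¹ / 2 * quadForm (H w₀) (w₂ - w₁) := by
  intro w₀ hw₀ w₁ hw₁ w₂ hw₂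
  set v := w₂ - w₁ with hv
  set N := 1 + M * D / μ with hN
  have hN0 : 0 < N := by rw [hN]; positivity
  set q0 := quadForm (H w₀) v with hq0
  have key : ∀ w ∈ C, quadForm (H w) v ≤ N * q0 ∧ N⁻¹ * q0 ≤ quadForm (H w) v := by
    intro w hw
    have hs : 0 ≤ v ⬝ᵥ v := dotProduct_self_nonneg' v
    have hβ0 : 0 ≤ M * euclNorm (w - w₀) :=
      mul_nonneg hM.le (Real.sqrt_nonneg _)
    have hβ : M * euclNorm (w - w₀) ≤ M * D :=
      mul_le_mul_of_nonneg_left (hdiam w hw w₀ hw₀) hM.le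
    have h1 := quad_le_of_psd (hLip w hw w₀ hw₀).1 v
    have h2 := quad_ge_of_psd (hLip w hw w₀ hw₀).2 v
    have h3 := quad_mu_le (hsc w₀ hw₀) v
    have h4 := quad_mu_le (hsc w hw) v
    have hβs : M * euclNorm (w - w₀) * (v ⬝ᵥ v) ≤ M * D * (v ⬝ᵥ v) :=
      mul_le_mul_of_nonneg_right hβ hs
    have hq0e : q0 = v ⬝ᵥ (H w₀).mulVec v := rfl
    have hqwe : quadForm (H w) v = v ⬝ᵥ (H w).mulVec v := rfl
    have hMD0 : 0 ≤ M * D / μ := by positivity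
    have hMDs0 : M * D / μ * (μ * (v ⬝ᵥ v)) ≤ M * D / μ * q0 := by
      rw [hq0e]; exact mul_le_mul_of_nonneg_left h3 hMD0
    have hMDsw : M * D / μ * (μ * (v ⬝ᵥ v)) ≤ M * D / μ * (v ⬝ᵥ (H w).mulVec v) :=
      mul_le_mul_of_nonneg_left h4 hMD0
    have heq : M * D / μ * (μ * (v ⬝ᵥ v)) = M * D * (v ⬝ᵥ v) := by
      field_simp
    constructor
    · rw [hqwe, hq0e]
      have hgoal : N * (v ⬝ᵥ (H w₀).mulVec v) =
          v ⬝ᵥ (H w₀).mulVec v + M * D / μ * (v ⬝ᵥ (H w₀).mulVec v) := by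
        rw [hN]; ring
      rw [hgoal]
      rw [hq0e] at hMDs0
      linarith
    · rw [hqwe]
      rw [inv_mul_le_iff₀ hN0, hq0e]
      have hgoal : N * (v ⬝ᵥ (H w).mulVec v) =
          v ⬝ᵥ (H w).mulVec v + M * D / μ * (v ⬝ᵥ (H w).mulVec v) := by
        rw [hN]; ring
      rw [hgoal]
      linarith
  have hmem : ∀ t ∈ Set.Icc (0:ℝ) 1, w₁ + t • (w₂ - w₁) ∈ C := by
    intro t ht
    have := hCconv hw₁ hw₂ (by linarith [ht.2] : (0:ℝ) ≤ 1 - t) ht.1 (by ring)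
    convert this using 1
    module
  obtain ⟨hu, hl⟩ := taylor_bound F g H hgrad hhess w₁ w₂ (N * q0) (N⁻¹ * q0)
    (fun t ht => (key _ (hmem t ht)).1) (fun t ht => (key _ (hmem t ht)).2)
  rw [← hv] at hu hl
  constructor
  · have : N / 2 * q0 = N * q0 / 2 := by ring
    linarith
  · have : N⁻¹ / 2 * q0 = N⁻¹ * q0 / 2 := by ring
    rw [ge_iff_le]
    linarith
end
end

section
/- Let F(w) = (1/n)∑ᵢ φᵢ(aᵢᵀw) + (ν/2)‖w‖², where each φᵢ is twice differentiable convex, and let 𝒞 ⊆ ℝ^p be convex. Let Σ̂ = (1/n)AᵀA where A has rows aᵢᵀ, u = supᵢ sup_{w∈𝒞} φᵢ''(aᵢᵀw) and ℓ = infᵢ inf_{w∈𝒞} φᵢ''(aᵢᵀw), with 0 ≤ ℓ ≤ u < ∞ and ν > 0. Then F is quadratically regular on 𝒞 with (ℓλ₁(Σ̂)+ν)/(uλ₁(Σ̂)+ν) ≤ γ_ℓ(𝒞) ≤ γ_u(𝒞) ≤ (uλ₁(Σ̂)+ν)/(ℓλ₁(Σ̂)+ν). -/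
open Matrix

noncomputable section

lemma quadForm_add {p : ℕ} (A B : Matrix (Fin p) (Fin p) ℝ) (v : Fin p → ℝ) :
    quadForm (A + B) v = quadForm A v + quadForm B v := by
  simp [quadForm, add_mulVec, dotProduct_add]

lemma quadForm_smul {p : ℕ} (c : ℝ) (A : Matrix (Fin p) (Fin p) ℝ) (v : Fin p → ℝ) :
    quadForm (c • A) v = c * quadForm A v := by
  simp [quadForm, smul_mulVec, dotProduct_smul]

lemma quadForm_sum {n p : ℕ} (A : Fin n → Matrix (Fin p) (Fin p) ℝ) (v : Fin p → ℝ) :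
    quadForm (∑ i, A i) v = ∑ i, quadForm (A i) v := by
  induction (Finset.univ : Finset (Fin n)) using Finset.induction with
  | empty => simp [quadForm]
  | insert _ _ h ih => simp [Finset.sum_insert h, quadForm_add, ih]

lemma quadForm_one {p : ℕ} (v : Fin p → ℝ) :
    quadForm (1 : Matrix (Fin p) (Fin p) ℝ) v = v ⬝ᵥ v := by
  simp [quadForm]

lemma quadForm_vecMulVec {p : ℕ} (a v : Fin p → ℝ) :
    quadForm (vecMulVec a a) v = (a ⬝ᵥ v) ^ 2 := by
  simp only [quadForm, Matrix.mulVec, dotProduct, Matrix.vecMulVec_apply, sq,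
    Finset.sum_mul, Finset.mul_sum]
  apply Finset.sum_congr rfl; intro i _
  apply Finset.sum_congr rfl; intro j _
  ring

lemma dot_sigma {n p : ℕ} (a : Fin n → Fin p → ℝ) (d : Fin p → ℝ) :
    d ⬝ᵥ ((n : ℝ)⁻¹ • ((Matrix.of a)ᵀ * Matrix.of a)).mulVec d
      = (n : ℝ)⁻¹ * ∑ i, (a i ⬝ᵥ d) ^ 2 := by
  have hATA : ((Matrix.of a)ᵀ * Matrix.of a) = ∑ i, vecMulVec (a i) (a i) := by
    ext j k
    simp [Matrix.mul_apply, Matrix.vecMulVec_apply, Matrix.sum_apply]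
  rw [smul_mulVec, dotProduct_smul, hATA]
  have hs := quadForm_sum (fun i => vecMulVec (a i) (a i)) d
  simp only [quadForm] at hs
  rw [hs]
  simp only [smul_eq_mul]
  congr 1
  apply Finset.sum_congr rfl
  intro i _
  simpa [quadForm] using quadForm_vecMulVec (a i) d

lemma taylor_ub (ψ Dψ DDψ : ℝ → ℝ)
    (h1 : ∀ t, HasDerivAt ψ (Dψ t) t) (h2 : ∀ t, HasDerivAt Dψ (DDψ t) t)
    (M : ℝ) (hM : ∀ t ∈ Set.Icc (0:ℝ) 1, DDψ t ≤ M) :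
    ψ 1 ≤ ψ 0 + Dψ 0 + M / 2 := by
  set G : ℝ → ℝ := fun t => M * t ^ 2 / 2 + ψ 0 + t * Dψ 0 - ψ t with hG
  set G' : ℝ → ℝ := fun t => M * t + Dψ 0 - Dψ t with hG'
  have hGd : ∀ t, HasDerivAt G (G' t) t := by
    intro t
    have h : HasDerivAt (fun t => M * t ^ 2 / 2 + ψ 0 + t * Dψ 0) (M * t + Dψ 0) t := by
      have := (((hasDerivAt_pow 2 t).const_mul M).div_const 2).add_const (ψ 0)
      have h2' := this.fun_add ((hasDerivAt_id t).mul_const (Dψ 0))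
      exact h2'.congr_deriv (by ring)
    simpa [hG, hG'] using h.fun_sub (h1 t)
  have hG'd : ∀ t, HasDerivAt G' (M - DDψ t) t := by
    intro t
    have h : HasDerivAt (fun t => M * t + Dψ 0) M t := by
      simpa using ((hasDerivAt_id t).const_mul M).add_const (Dψ 0)
    simpa [hG'] using h.fun_sub (h2 t)
  have hmono' : MonotoneOn G' (Set.Icc 0 1) := by
    apply monotoneOn_of_deriv_nonneg (convex_Icc 0 1)
    · exact fun t _ => (hG'd t).continuousAt.continuousWithinAt
    · exact fun t _ => ((hG'd t).differentiableAt).differentiableWithinAt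
    · intro t ht
      rw [interior_Icc] at ht
      rw [(hG'd t).deriv]
      have := hM t (Set.mem_Icc.mpr ⟨le_of_lt ht.1, le_of_lt ht.2⟩)
      linarith
  have hG'0 : G' 0 = 0 := by simp [hG']
  have hG'nonneg : ∀ t ∈ Set.Icc (0:ℝ) 1, 0 ≤ G' t := by
    intro t ht
    have := hmono' (Set.left_mem_Icc.mpr zero_le_one) ht ht.1
    rwa [hG'0] at this
  have hmono : MonotoneOn G (Set.Icc 0 1) := by
    apply monotoneOn_of_deriv_nonneg (convex_Icc 0 1)
    · exact fun t _ => (hGd t).continuousAt.continuousWithinAt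
    · exact fun t _ => ((hGd t).differentiableAt).differentiableWithinAt
    · intro t ht
      rw [interior_Icc] at ht
      rw [(hGd t).deriv]
      exact hG'nonneg t (Set.mem_Icc.mpr ⟨le_of_lt ht.1, le_of_lt ht.2⟩)
  have h01 : G 0 ≤ G 1 := hmono (Set.left_mem_Icc.mpr zero_le_one)
    (Set.right_mem_Icc.mpr zero_le_one) zero_le_one
  have hG0 : G 0 = 0 := by simp [hG]
  have hG1 : G 1 = M / 2 + ψ 0 + Dψ 0 - ψ 1 := by simp [hG]
  rw [hG0, hG1] at h01
  linarith

lemma key_ineq (ν u ℓ lam q s x y : ℝ) (hν : 0 < ν) (hℓ : 0 ≤ ℓ) (hℓu : ℓ ≤ u)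
    (hlam : 0 ≤ lam) (hql : q ≤ lam * s)
    (hx1 : ℓ*q+ν*s ≤ x) (hx2 : x ≤ u*q+ν*s) (hy1 : ℓ*q+ν*s ≤ y) (hy2 : y ≤ u*q+ν*s) :
    x ≤ (u*lam+ν)/(ℓ*lam+ν) * y ∧ (ℓ*lam+ν)/(u*lam+ν) * y ≤ x := by
  have hD1 : 0 < ℓ*lam+ν := by positivity
  have hD2 : 0 < u*lam+ν := by nlinarith
  have hmid : (u*q+ν*s)*(ℓ*lam+ν) ≤ (ℓ*q+ν*s)*(u*lam+ν) := by
    nlinarith [mul_nonneg (mul_nonneg hν.le (sub_nonneg.2 hℓu)) (sub_nonneg.2 hql)]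
  constructor
  · rw [div_mul_eq_mul_div, le_div_iff₀ hD1]
    nlinarith
  · rw [div_mul_eq_mul_div, div_le_iff₀ hD2]
    nlinarith

/-- Quadratic regularity of GLMs: if `F(w) = (1/n)∑ᵢ φᵢ(aᵢᵀw) + (ν/2)‖w‖²`, with
`Σ̂ = (1/n)AᵀA`, `lam = λ₁(Σ̂)` its largest eigenvalue,
`u = sup φ''` and `ℓ = inf φ''` over `C`, then `F` is quadratically regular on `C` with
`(ℓ·lam+ν)/(u·lam+ν) ≤ γℓ(C) ≤ γu(C) ≤ (u·lam+ν)/(ℓ·lam+ν)`: the upper quadratic regularity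
bound holds with constant `(u·lam+ν)/(ℓ·lam+ν)` and the lower with its reciprocal. -/
theorem quadratic_regularity_of_glm {n p : ℕ} (hn : 0 < n)
    (a : Fin n → Fin p → ℝ) (φ φ' φ'' : Fin n → ℝ → ℝ)
    (hφ' : ∀ i x, HasDerivAt (φ i) (φ' i x) x)
    (hφ'' : ∀ i x, HasDerivAt (φ' i) (φ'' i x) x)
    (hφconv : ∀ i x, 0 ≤ φ'' i x)
    (C : Set (Fin p → ℝ)) (hCconv : Convex ℝ C)
    (ν u ℓ lam : ℝ) (hν : 0 < ν) (hℓ : 0 ≤ ℓ) (hℓu : ℓ ≤ u)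
    (hbounds : ∀ i, ∀ w ∈ C, ℓ ≤ φ'' i (a i ⬝ᵥ w) ∧ φ'' i (a i ⬝ᵥ w) ≤ u)
    (hlam_ub : (lam • (1 : Matrix (Fin p) (Fin p) ℝ)
        - (n : ℝ)⁻¹ • ((Matrix.of a)ᵀ * Matrix.of a)).PosSemidef)
    (hlam_eig : ∃ v : Fin p → ℝ, v ≠ 0 ∧
        ((n : ℝ)⁻¹ • ((Matrix.of a)ᵀ * Matrix.of a)).mulVec v = lam • v) :
    let F : (Fin p → ℝ) → ℝ := fun w => (n : ℝ)⁻¹ * ∑ i, φ i (a i ⬝ᵥ w) + ν / 2 * (w ⬝ᵥ w)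
    let g : (Fin p → ℝ) → Fin p → ℝ := fun w =>
      (n : ℝ)⁻¹ • (∑ i, φ' i (a i ⬝ᵥ w) • a i) + ν • w
    let H : (Fin p → ℝ) → Matrix (Fin p) (Fin p) ℝ := fun w =>
      (n : ℝ)⁻¹ • (∑ i, φ'' i (a i ⬝ᵥ w) • vecMulVec (a i) (a i))
        + ν • (1 : Matrix (Fin p) (Fin p) ℝ)
    ∀ w₀ ∈ C, ∀ w₁ ∈ C, ∀ w₂ ∈ C,
      F w₂ ≤ F w₁ + g w₁ ⬝ᵥ (w₂ - w₁)
          + ((u * lam + ν) / (ℓ * lam + ν)) / 2 * quadForm (H w₀) (w₂ - w₁) ∧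
      F w₂ ≥ F w₁ + g w₁ ⬝ᵥ (w₂ - w₁)
          + ((ℓ * lam + ν) / (u * lam + ν)) / 2 * quadForm (H w₀) (w₂ - w₁) := by
  intro F g H w₀ hw₀ w₁ hw₁ w₂ hw₂
  set d : Fin p → ℝ := w₂ - w₁ with hd
  set q : ℝ := (n : ℝ)⁻¹ * ∑ i, (a i ⬝ᵥ d) ^ 2 with hq
  set s : ℝ := d ⬝ᵥ d with hs
  have hninv : (0:ℝ) ≤ (n : ℝ)⁻¹ := by positivity
  have hq0 : 0 ≤ q := by
    apply mul_nonneg hninv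
    exact Finset.sum_nonneg fun i _ => sq_nonneg _
  have hs0 : 0 ≤ s := by
    simp only [hs, dotProduct]
    exact Finset.sum_nonneg fun i _ => mul_self_nonneg _
  -- lam ≥ 0
  have hlam0 : 0 ≤ lam := by
    obtain ⟨v, hv0, hev⟩ := hlam_eig
    have hvv : 0 < v ⬝ᵥ v := by
      rcases lt_or_eq_of_le (Finset.sum_nonneg fun i (_ : i ∈ Finset.univ) =>
        mul_self_nonneg (v i)) with h | h
      · exact h
      · exfalso; apply hv0
        have : v ⬝ᵥ v = 0 := by simpa [dotProduct] using h.symm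
        exact (dotProduct_self_eq_zero).mp this
    have hval : v ⬝ᵥ ((n : ℝ)⁻¹ • ((Matrix.of a)ᵀ * Matrix.of a)).mulVec v
        = lam * (v ⬝ᵥ v) := by
      rw [hev]; simp [dotProduct_smul]
    have hval2 : 0 ≤ lam * (v ⬝ᵥ v) := by
      rw [← hval, dot_sigma]
      apply mul_nonneg hninv
      exact Finset.sum_nonneg fun i _ => sq_nonneg _
    exact nonneg_of_mul_nonneg_right (by rw [mul_comm] at hval2; exact hval2) hvv
  -- q ≤ lam * s
  have hql : q ≤ lam * s := by
    have hpsd := hlam_ub.dotProduct_mulVec_nonneg d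
    have : 0 ≤ d ⬝ᵥ (lam • (1 : Matrix (Fin p) (Fin p) ℝ)
        - (n : ℝ)⁻¹ • ((Matrix.of a)ᵀ * Matrix.of a)).mulVec d := by
      simpa using hpsd
    rw [sub_mulVec, dotProduct_sub, dot_sigma, smul_mulVec, one_mulVec,
      dotProduct_smul] at this
    simp only [smul_eq_mul] at this
    rw [hq, hs]
    linarith
  -- quadform expansion
  have hQF : ∀ w : Fin p → ℝ, quadForm (H w) d
      = (n : ℝ)⁻¹ * (∑ i, φ'' i (a i ⬝ᵥ w) * (a i ⬝ᵥ d) ^ 2) + ν * s := by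
    intro w
    show quadForm ((n : ℝ)⁻¹ • (∑ i, φ'' i (a i ⬝ᵥ w) • vecMulVec (a i) (a i))
        + ν • (1 : Matrix (Fin p) (Fin p) ℝ)) d = _
    rw [quadForm_add, quadForm_smul, quadForm_smul, quadForm_one, quadForm_sum]
    congr 2
    apply Finset.sum_congr rfl
    intro i _
    rw [quadForm_smul, quadForm_vecMulVec]
  -- quadform bounds on C
  have hQb : ∀ w ∈ C, ℓ*q+ν*s ≤ quadForm (H w) d ∧ quadForm (H w) d ≤ u*q+ν*s := by
    intro w hw
    rw [hQF w]
    have e : ∀ c : ℝ, c * q = (n : ℝ)⁻¹ * ∑ i, c * (a i ⬝ᵥ d) ^ 2 := by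
      intro c
      simp only [hq, Finset.mul_sum]
      apply Finset.sum_congr rfl
      intros; ring
    constructor
    · rw [e ℓ]
      apply add_le_add_left
      apply mul_le_mul_of_nonneg_left _ hninv
      apply Finset.sum_le_sum
      intro i _
      exact mul_le_mul_of_nonneg_right (hbounds i w hw).1 (sq_nonneg _)
    · rw [e u]
      apply add_le_add_left
      apply mul_le_mul_of_nonneg_left _ hninv
      apply Finset.sum_le_sum
      intro i _
      exact mul_le_mul_of_nonneg_right (hbounds i w hw).2 (sq_nonneg _)
  -- segment in C
  have hseg : ∀ t ∈ Set.Icc (0:ℝ) 1, w₁ + t • d ∈ C := by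
    intro t ht
    have := hCconv hw₁ hw₂ (by linarith [ht.2] : (0:ℝ) ≤ 1 - t) ht.1 (by ring)
    convert this using 1
    rw [hd]
    module
  -- explicit 1-D functions
  set ψ : ℝ → ℝ := fun t => (n : ℝ)⁻¹ * ∑ i, φ i (a i ⬝ᵥ w₁ + t * (a i ⬝ᵥ d))
      + (ν/2 * (w₁ ⬝ᵥ w₁) + ν * (w₁ ⬝ᵥ d) * t + ν/2 * s * t ^ 2) with hψ
  set Dψ : ℝ → ℝ := fun t => (n : ℝ)⁻¹ * ∑ i, φ' i (a i ⬝ᵥ w₁ + t * (a i ⬝ᵥ d)) * (a i ⬝ᵥ d)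
      + (ν * (w₁ ⬝ᵥ d) + ν * s * t) with hDψ
  set DDψ : ℝ → ℝ := fun t => (n : ℝ)⁻¹ * ∑ i, φ'' i (a i ⬝ᵥ w₁ + t * (a i ⬝ᵥ d)) * (a i ⬝ᵥ d) ^ 2
      + ν * s with hDDψ
  have hdotseg : ∀ (i : Fin n) (t : ℝ), a i ⬝ᵥ w₁ + t * (a i ⬝ᵥ d) = a i ⬝ᵥ (w₁ + t • d) := by
    intro i t
    rw [dotProduct_add, dotProduct_smul, smul_eq_mul]
  have h1 : ∀ t, HasDerivAt ψ (Dψ t) t := by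
    intro t
    have hsum : HasDerivAt (fun t => ∑ i, φ i (a i ⬝ᵥ w₁ + t * (a i ⬝ᵥ d)))
        (∑ i, φ' i (a i ⬝ᵥ w₁ + t * (a i ⬝ᵥ d)) * (a i ⬝ᵥ d)) t := by
      apply HasDerivAt.fun_sum
      intro i _
      have haff : HasDerivAt (fun t : ℝ => a i ⬝ᵥ w₁ + t * (a i ⬝ᵥ d)) (a i ⬝ᵥ d) t := by
        simpa using ((hasDerivAt_id t).mul_const (a i ⬝ᵥ d)).const_add (a i ⬝ᵥ w₁)
      exact (hφ' i _).comp t haff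
    have hpoly : HasDerivAt (fun t => ν/2 * (w₁ ⬝ᵥ w₁) + ν * (w₁ ⬝ᵥ d) * t + ν/2 * s * t ^ 2)
        (ν * (w₁ ⬝ᵥ d) + ν * s * t) t := by
      have h := (((hasDerivAt_id t).const_mul (ν * (w₁ ⬝ᵥ d))).const_add (ν/2 * (w₁ ⬝ᵥ w₁))).fun_add
        ((hasDerivAt_pow 2 t).const_mul (ν/2 * s))
      exact h.congr_deriv (by ring)
    simpa [hψ, hDψ] using (hsum.const_mul ((n:ℝ)⁻¹)).fun_add hpoly
  have h2 : ∀ t, HasDerivAt Dψ (DDψ t) t := by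
    intro t
    have hsum : HasDerivAt (fun t => ∑ i, φ' i (a i ⬝ᵥ w₁ + t * (a i ⬝ᵥ d)) * (a i ⬝ᵥ d))
        (∑ i, φ'' i (a i ⬝ᵥ w₁ + t * (a i ⬝ᵥ d)) * (a i ⬝ᵥ d) ^ 2) t := by
      apply HasDerivAt.fun_sum
      intro i _
      have haff : HasDerivAt (fun t : ℝ => a i ⬝ᵥ w₁ + t * (a i ⬝ᵥ d)) (a i ⬝ᵥ d) t := by
        simpa using ((hasDerivAt_id t).mul_const (a i ⬝ᵥ d)).const_add (a i ⬝ᵥ w₁)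
      have := ((hφ'' i _).comp t haff).mul_const (a i ⬝ᵥ d)
      exact this.congr_deriv (by ring)
    have hpoly : HasDerivAt (fun t => ν * (w₁ ⬝ᵥ d) + ν * s * t) (ν * s) t := by
      simpa using ((hasDerivAt_id t).const_mul (ν * s)).const_add (ν * (w₁ ⬝ᵥ d))
    simpa [hDψ, hDDψ] using (hsum.const_mul ((n:ℝ)⁻¹)).fun_add hpoly
  -- DDψ t = quadForm (H (w₁ + t•d)) d
  have hDDeq : ∀ t, DDψ t = quadForm (H (w₁ + t • d)) d := by
    intro t
    rw [hQF]
    simp only [hDDψ]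
    congr 1
    congr 1
    apply Finset.sum_congr rfl
    intro i _
    rw [hdotseg]
  -- bounds on DDψ over [0,1]
  set K : ℝ := quadForm (H w₀) d with hK
  have hKb := hQb w₀ hw₀
  have hDDb : ∀ t ∈ Set.Icc (0:ℝ) 1,
      (ℓ*lam+ν)/(u*lam+ν) * K ≤ DDψ t ∧ DDψ t ≤ (u*lam+ν)/(ℓ*lam+ν) * K := by
    intro t ht
    rw [hDDeq t]
    have hb := hQb _ (hseg t ht)
    have := key_ineq ν u ℓ lam q s _ K hν hℓ hℓu hlam0 hql hb.1 hb.2 hKb.1 hKb.2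
    exact ⟨this.2, this.1⟩
  -- endpoint values
  have hψ0 : ψ 0 = F w₁ := by
    simp only [hψ, F]
    norm_num
  have hψ1 : ψ 1 = F w₂ := by
    simp only [hψ, F]
    have h1' : ∀ i : Fin n, a i ⬝ᵥ w₁ + 1 * (a i ⬝ᵥ d) = a i ⬝ᵥ w₂ := by
      intro i
      rw [one_mul, hd, dotProduct_sub]
      ring
    have h2' : w₂ ⬝ᵥ w₂ = w₁ ⬝ᵥ w₁ + 2 * (w₁ ⬝ᵥ d) + s := by
      simp only [hs, hd, dotProduct_sub, sub_dotProduct, dotProduct_comm w₂ w₁]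
      ring
    simp only [h1']
    rw [h2']
    ring
  have hDψ0 : Dψ 0 = g w₁ ⬝ᵥ d := by
    simp only [hDψ, g]
    rw [add_dotProduct, smul_dotProduct, smul_dotProduct]
    have : (∑ i, φ' i (a i ⬝ᵥ w₁) • a i) ⬝ᵥ d = ∑ i, φ' i (a i ⬝ᵥ w₁) * (a i ⬝ᵥ d) := by
      simp only [dotProduct, Finset.sum_apply, Pi.smul_apply, smul_eq_mul,
        Finset.sum_mul, Finset.mul_sum]
      rw [Finset.sum_comm]
      apply Finset.sum_congr rfl; intro i _
      apply Finset.sum_congr rfl; intro j _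
      ring
    simp only [mul_zero, add_zero, mul_zero, smul_eq_mul]
    rw [this]
    norm_num
  constructor
  · -- upper bound
    have := taylor_ub ψ Dψ DDψ h1 h2 ((u*lam+ν)/(ℓ*lam+ν) * K)
      (fun t ht => (hDDb t ht).2)
    rw [hψ0, hψ1, hDψ0] at this
    calc F w₂ ≤ F w₁ + g w₁ ⬝ᵥ d + (u*lam+ν)/(ℓ*lam+ν) * K / 2 := this
    _ = F w₁ + g w₁ ⬝ᵥ d + ((u * lam + ν) / (ℓ * lam + ν)) / 2 * K := by ring
  · -- lower bound
    have hneg1 : ∀ t, HasDerivAt (fun t => -ψ t) (-Dψ t) t := fun t => (h1 t).neg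
    have hneg2 : ∀ t, HasDerivAt (fun t => -Dψ t) (-DDψ t) t := fun t => (h2 t).neg
    have := taylor_ub (fun t => -ψ t) (fun t => -Dψ t) (fun t => -DDψ t) hneg1 hneg2
      (-((ℓ*lam+ν)/(u*lam+ν) * K)) (fun t ht => by
        have := (hDDb t ht).1; linarith)
    rw [hψ0, hψ1, hDψ0] at this
    have : F w₁ + g w₁ ⬝ᵥ d + ((ℓ*lam+ν)/(u*lam+ν)) / 2 * K ≤ F w₂ := by linarith
    exact this
end
end

section
/- Let F be a k-generalized self-concordant twice-differentiable strictly convex function on a compact convex set C of diameter D, meaning that for every w ∈ C and directions d, d', the function φ(t) = ‖d‖²_{∇²F(w+td')} satisfies φ'(t) ≤ k‖d'‖φ(t). Then the quadratic regularity constants of F on C satisfy exp(−kD) ≤ γ_ℓ(C) ≤ γ_u(C) ≤ exp(kD). -/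
open Matrix

noncomputable section

/-- If `f` has nonpositive derivative on `(0,1)`, then `f t ≤ f 0` on `[0,1]`. -/
lemma decay_aux (f f' : ℝ → ℝ) (hf : ∀ t, HasDerivAt f (f' t) t)
    (h0 : ∀ t ∈ Set.Ioo (0:ℝ) 1, f' t ≤ 0) :
    ∀ t ∈ Set.Icc (0:ℝ) 1, f t ≤ f 0 := by
  have hA : AntitoneOn f (Set.Icc 0 1) := by
    apply antitoneOn_of_deriv_nonpos (convex_Icc 0 1)
    · exact fun t _ => (hf t).continuousAt.continuousWithinAt
    · intro t ht
      exact (hf t).differentiableAt.differentiableWithinAt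
    · intro t ht
      rw [interior_Icc] at ht
      rw [(hf t).deriv]
      exact h0 t ht
  intro t ht
  exact hA (Set.left_mem_Icc.2 zero_le_one) ht ht.1

/-- Grönwall-type inequality on `[0,1]`. -/
lemma gronwall_aux (φ φ' : ℝ → ℝ) (K : ℝ) (hd : ∀ t, HasDerivAt φ (φ' t) t)
    (hb : ∀ t ∈ Set.Ioo (0:ℝ) 1, φ' t ≤ K * φ t) :
    φ 1 ≤ Real.exp K * φ 0 := by
  have hfd : ∀ t, HasDerivAt (fun t => Real.exp (-K * t) * φ t)
      (Real.exp (-K * t) * (φ' t - K * φ t)) t := by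
    intro t
    have h1 : HasDerivAt (fun t : ℝ => Real.exp (-K * t)) (-K * Real.exp (-K * t)) t := by
      have h2 : HasDerivAt (fun t : ℝ => -K * t) (-K) t := by
        simpa using (hasDerivAt_id t).const_mul (-K)
      simpa [mul_comm] using h2.exp
    have := h1.mul (hd t)
    exact this.congr_deriv (by ring)
  have hdec := decay_aux _ _ hfd (fun t ht => by
    have h1 := hb t ht
    have h2 : φ' t - K * φ t ≤ 0 := by linarith
    exact mul_nonpos_of_nonneg_of_nonpos (Real.exp_nonneg _) h2)
  have h3 := hdec 1 (Set.right_mem_Icc.2 zero_le_one)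
  simp only [mul_zero, mul_one, Real.exp_zero, one_mul] at h3
  have h4 : Real.exp K * (Real.exp (-K) * φ 1) = φ 1 := by
    rw [← mul_assoc, ← Real.exp_add]
    simp
  calc φ 1 = Real.exp K * (Real.exp (-K) * φ 1) := h4.symm
    _ ≤ Real.exp K * φ 0 := mul_le_mul_of_nonneg_left h3 (Real.exp_nonneg _)

lemma lineDeriv_aux {p : ℕ} (w d : Fin p → ℝ) (t : ℝ) :
    HasDerivAt (fun s : ℝ => w + s • d) d t := by
  simpa using ((hasDerivAt_id t).smul_const d).const_add w

/-- Quadratic regularity of `k`-generalized self-concordant functions: if `F` is twice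
differentiable and strictly convex on a compact convex set `C` of diameter `D`, and for all
`w ∈ C` and directions `d, d'`, the function `φ(t) = ‖d‖²_{∇²F(w+td')}` satisfies
`φ'(t) ≤ k‖d'‖φ(t)` (its derivative being `ψ w d d' t`), then `F` is quadratically regular on
`C` with `exp(−kD) ≤ γℓ(C) ≤ γu(C) ≤ exp(kD)`: the upper quadratic regularity bound holds with
constant `exp(kD)` and the lower with `exp(−kD)`. -/
theorem quadratic_regularity_of_self_concordant {p : ℕ}
    (C : Set (Fin p → ℝ)) (hCcompact : IsCompact C) (hCconv : Convex ℝ C)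
    (F : (Fin p → ℝ) → ℝ) (g : (Fin p → ℝ) → Fin p → ℝ)
    (H : (Fin p → ℝ) → Matrix (Fin p) (Fin p) ℝ)
    (hgrad : ∀ x, ∃ f' : (Fin p → ℝ) →L[ℝ] ℝ, HasFDerivAt F f' x ∧ ∀ v, f' v = g x ⬝ᵥ v)
    (hhess : ∀ x, ∃ g' : (Fin p → ℝ) →L[ℝ] (Fin p → ℝ),
      HasFDerivAt g g' x ∧ ∀ v, g' v = (H x).mulVec v)
    (hstrict : ∀ w ∈ C, (H w).PosDef)
    (k D : ℝ) (hk : 0 < k) (hD : 0 ≤ D)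
    (hdiam : ∀ w ∈ C, ∀ w' ∈ C, euclNorm (w - w') ≤ D)
    (ψ : (Fin p → ℝ) → (Fin p → ℝ) → (Fin p → ℝ) → ℝ → ℝ)
    (hψ : ∀ w d d' t, HasDerivAt (fun s => quadForm (H (w + s • d')) d) (ψ w d d' t) t)
    (hsc : ∀ w ∈ C, ∀ (d d' : Fin p → ℝ) (t : ℝ), w + t • d' ∈ C →
      ψ w d d' t ≤ k * euclNorm d' * quadForm (H (w + t • d')) d) :
    ∀ w₀ ∈ C, ∀ w₁ ∈ C, ∀ w₂ ∈ C,
      F w₂ ≤ F w₁ + g w₁ ⬝ᵥ (w₂ - w₁)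
          + Real.exp (k * D) / 2 * quadForm (H w₀) (w₂ - w₁) ∧
      F w₂ ≥ F w₁ + g w₁ ⬝ᵥ (w₂ - w₁)
          + Real.exp (-(k * D)) / 2 * quadForm (H w₀) (w₂ - w₁) := by
  -- segment membership
  have hseg : ∀ a ∈ C, ∀ b ∈ C, ∀ t ∈ Set.Icc (0:ℝ) 1, a + t • (b - a) ∈ C := by
    intro a ha b hb t ht
    have h := hCconv ha hb (by linarith [ht.2] : (0:ℝ) ≤ 1 - t) ht.1 (by ring)
    convert h using 1
    module
  -- Hessian comparison from self-concordance via Grönwall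
  have hcmp : ∀ w ∈ C, ∀ w' ∈ C, ∀ v,
      quadForm (H w') v ≤ Real.exp (k * D) * quadForm (H w) v := by
    intro w hw w' hw' v
    have hgr := gronwall_aux (fun t => quadForm (H (w + t • (w' - w))) v) (ψ w v (w' - w))
        (k * euclNorm (w' - w)) (hψ w v (w' - w))
        (fun t ht => hsc w hw v (w' - w) t (hseg w hw w' hw' t (Set.Ioo_subset_Icc_self ht)))
    have h1 : w + (w' - w) = w' := by module
    have hgr' : quadForm (H w') v ≤
        Real.exp (k * euclNorm (w' - w)) * quadForm (H w) v := by
      simpa [h1] using hgr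
    have hexp : Real.exp (k * euclNorm (w' - w)) ≤ Real.exp (k * D) :=
      Real.exp_le_exp.2 (mul_le_mul_of_nonneg_left (hdiam w' hw' w hw) hk.le)
    have hnn : 0 ≤ quadForm (H w) v := by
      simpa [quadForm] using (hstrict w hw).posSemidef.dotProduct_mulVec_nonneg v
    exact hgr'.trans (mul_le_mul_of_nonneg_right hexp hnn)
  intro w₀ hw₀ w₁ hw₁ w₂ hw₂
  set d : Fin p → ℝ := w₂ - w₁ with hdd
  -- derivative of F along the segment
  have hFd : ∀ t : ℝ, HasDerivAt (fun s => F (w₁ + s • d)) (g (w₁ + t • d) ⬝ᵥ d) t := by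
    intro t
    obtain ⟨f', hF, hf'⟩ := hgrad (w₁ + t • d)
    have := hF.comp_hasDerivAt t (lineDeriv_aux w₁ d t)
    exact this.congr_deriv (hf' d)
  -- derivative of the directional gradient along the segment
  have hGd : ∀ t : ℝ, HasDerivAt (fun s => g (w₁ + s • d) ⬝ᵥ d)
      (quadForm (H (w₁ + t • d)) d) t := by
    intro t
    obtain ⟨g', hG, hg'⟩ := hhess (w₁ + t • d)
    have h1 := hG.comp_hasDerivAt t (lineDeriv_aux w₁ d t)
    have h2 := (dotCLM d).hasFDerivAt.comp_hasDerivAt t h1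
    have h3 : HasDerivAt (fun s => g (w₁ + s • d) ⬝ᵥ d) ((H (w₁ + t • d)).mulVec d ⬝ᵥ d) t := by
      exact h2.congr_deriv (by rw [dotCLM_apply, hg'])
    have h4 : quadForm (H (w₁ + t • d)) d = (H (w₁ + t • d)).mulVec d ⬝ᵥ d :=
      dotProduct_comm _ _
    rw [h4]
    exact h3
  have hmemKnot : ∀ t ∈ Set.Icc (0:ℝ) 1, w₁ + t • d ∈ C := fun t ht => hseg w₁ hw₁ w₂ hw₂ t ht
  have hw12 : w₁ + d = w₂ := by rw [hdd]; module
  set Q : ℝ := quadForm (H w₀) d with hQ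
  constructor
  · -- upper bound
    set Ku : ℝ := Real.exp (k * D) * Q with hKu
    have hlin : ∀ t : ℝ, HasDerivAt (fun t : ℝ => Ku * t) Ku t := fun t => by
      simpa using (hasDerivAt_id t).const_mul Ku
    have hA'd : ∀ t : ℝ, HasDerivAt (fun t => g (w₁ + t • d) ⬝ᵥ d - g w₁ ⬝ᵥ d - Ku * t)
        (quadForm (H (w₁ + t • d)) d - Ku) t := fun t => ((hGd t).sub_const _).sub (hlin t)
    have hA'le := decay_aux _ _ hA'd (fun t ht => by
      have hmem := hmemKnot t (Set.Ioo_subset_Icc_self ht)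
      have := hcmp w₀ hw₀ (w₁ + t • d) hmem d
      rw [← hQ, ← hKu] at this
      linarith)
    have hA'0 : g (w₁ + (0:ℝ) • d) ⬝ᵥ d - g w₁ ⬝ᵥ d - Ku * 0 = 0 := by simp
    have hAd : ∀ t : ℝ, HasDerivAt (fun t => F (w₁ + t • d) - t * (g w₁ ⬝ᵥ d) - Ku * (t^2/2))
        (g (w₁ + t • d) ⬝ᵥ d - g w₁ ⬝ᵥ d - Ku * t) t := by
      intro t
      have h1 : HasDerivAt (fun t : ℝ => t * (g w₁ ⬝ᵥ d)) (g w₁ ⬝ᵥ d) t := by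
        simpa using (hasDerivAt_id t).mul_const (g w₁ ⬝ᵥ d)
      have h2 : HasDerivAt (fun t : ℝ => Ku * (t^2/2)) (Ku * t) t := by
        have := ((hasDerivAt_pow 2 t).div_const 2).const_mul Ku
        exact this.congr_deriv (by norm_num <;> ring)
      exact ((hFd t).sub h1).sub h2
    have hfin := decay_aux _ _ hAd (fun t ht => by
      have := hA'le t (Set.Ioo_subset_Icc_self ht)
      rw [hA'0] at this
      exact this) 1 (Set.right_mem_Icc.2 zero_le_one)
    simp only [one_smul, zero_smul, add_zero, one_pow, mul_zero, sub_zero, zero_mul,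
      one_mul, hw12] at hfin
    have hQrw : Real.exp (k * D) / 2 * quadForm (H w₀) (w₂ - w₁) = Ku * (1/2) := by
      rw [hKu, hQ, hdd]; ring
    rw [hQrw]
    linarith
  · -- lower bound
    set Kl : ℝ := Real.exp (-(k * D)) * Q with hKl
    have hKlb : ∀ t ∈ Set.Ioo (0:ℝ) 1, Kl ≤ quadForm (H (w₁ + t • d)) d := by
      intro t ht
      have hmem := hmemKnot t (Set.Ioo_subset_Icc_self ht)
      have h6 := hcmp (w₁ + t • d) hmem w₀ hw₀ d
      rw [← hQ] at h6
      have h7 := mul_le_mul_of_nonneg_left h6 (Real.exp_nonneg (-(k * D)))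
      rw [← mul_assoc, ← Real.exp_add] at h7
      simpa [hKl] using h7
    have hlin : ∀ t : ℝ, HasDerivAt (fun t : ℝ => Kl * t) Kl t := fun t => by
      simpa using (hasDerivAt_id t).const_mul Kl
    have hB'd : ∀ t : ℝ, HasDerivAt
        (fun t => g w₁ ⬝ᵥ d + Kl * t - g (w₁ + t • d) ⬝ᵥ d)
        (Kl - quadForm (H (w₁ + t • d)) d) t := fun t => by
      exact (((hasDerivAt_const t (g w₁ ⬝ᵥ d)).add (hlin t)).sub (hGd t)).congr_deriv (by ring)
    have hB'le := decay_aux _ _ hB'd (fun t ht => by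
      have := hKlb t ht
      linarith)
    have hB'0 : g w₁ ⬝ᵥ d + Kl * 0 - g (w₁ + (0:ℝ) • d) ⬝ᵥ d = 0 := by simp
    have hBd : ∀ t : ℝ, HasDerivAt
        (fun t => t * (g w₁ ⬝ᵥ d) + Kl * (t^2/2) - F (w₁ + t • d))
        (g w₁ ⬝ᵥ d + Kl * t - g (w₁ + t • d) ⬝ᵥ d) t := by
      intro t
      have h1 : HasDerivAt (fun t : ℝ => t * (g w₁ ⬝ᵥ d)) (g w₁ ⬝ᵥ d) t := by
        simpa using (hasDerivAt_id t).mul_const (g w₁ ⬝ᵥ d)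
      have h2 : HasDerivAt (fun t : ℝ => Kl * (t^2/2)) (Kl * t) t := by
        have := ((hasDerivAt_pow 2 t).div_const 2).const_mul Kl
        exact this.congr_deriv (by norm_num <;> ring)
      exact (h1.add h2).sub (hFd t)
    have hfin := decay_aux _ _ hBd (fun t ht => by
      have := hB'le t (Set.Ioo_subset_Icc_self ht)
      rw [hB'0] at this
      exact this) 1 (Set.right_mem_Icc.2 zero_le_one)
    simp only [one_smul, zero_smul, add_zero, one_pow, mul_zero, sub_zero, zero_mul,
      one_mul, hw12, zero_add] at hfin
    have hQrw : Real.exp (-(k * D)) / 2 * quadForm (H w₀) (w₂ - w₁) = Kl * (1/2) := by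
      rw [hKl, hQ, hdd]; ring
    rw [ge_iff_le, hQrw]
    linarith
end
end

section
/- Suppose A ∈ ℝ^{n×p} has singular values satisfying σⱼ(A)² ≤ C j^{−2β} for all 1 ≤ j ≤ p, where β ≥ 1 is an integer and C > 0, and let ν > 0. Then the effective dimension satisfies d_eff^ν(A) = ∑ⱼ σⱼ²(A)/(σⱼ²(A) + nν) ≤ (π/(2β))/sin(π/(2β)) · (C/(nν))^{1/(2β)}. -/
open Matrix

noncomputable section

theorem Matrix.isHermitian_transpose_mul_self {m k : Type*} [Fintype m] (A : Matrix m k ℝ) :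
    (Aᵀ * A).IsHermitian :=
  by simpa using Matrix.isHermitian_conjTranspose_mul_self A

open Real Set MeasureTheory

lemma beta_real {a : ℝ} (h0 : 0 < a) (h1 : a < 1) :
    ∫ s in Set.Ioo (0:ℝ) 1, s ^ (a-1) * (1-s) ^ (-a) = π / Real.sin (π * a) := by
  have key : ((∫ s in Set.Ioo (0:ℝ) 1, s ^ (a-1) * (1-s) ^ (-a) : ℝ) : ℂ)
      = ((π / Real.sin (π * a) : ℝ) : ℂ) := by
    have hb : Complex.betaIntegral a (1 - a)
        = ((∫ s in Set.Ioo (0:ℝ) 1, s ^ (a-1) * (1-s) ^ (-a) : ℝ) : ℂ) := by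
      rw [Complex.betaIntegral, intervalIntegral.integral_of_le zero_le_one,
        MeasureTheory.integral_Ioc_eq_integral_Ioo]
      have step : ∫ (t : ℝ) in Ioo 0 1, ((t ^ (a-1) * (1-t) ^ (-a) : ℝ) : ℂ) ∂volume
          = ((∫ (t : ℝ) in Ioo 0 1, t ^ (a-1) * (1-t) ^ (-a) : ℝ) : ℂ) := integral_ofReal
      rw [← step]
      refine MeasureTheory.setIntegral_congr_fun measurableSet_Ioo (fun s hs => ?_)
      obtain ⟨hs0, hs1⟩ := hs
      have h1s : (0:ℝ) < 1 - s := by linarith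
      rw [Complex.ofReal_mul, Complex.ofReal_cpow hs0.le, Complex.ofReal_cpow h1s.le]
      push_cast
      ring_nf
    have hg : Complex.Gamma a * Complex.Gamma (1 - (a:ℂ))
        = Complex.betaIntegral a (1 - a) := by
      have := Complex.Gamma_mul_Gamma_eq_betaIntegral (s := (a:ℂ)) (t := 1 - (a:ℂ))
        (by simpa using h0) (by simp [Complex.sub_re]; linarith)
      simpa [Complex.Gamma_one] using this
    have hr : Complex.Gamma a * Complex.Gamma (1 - (a:ℂ))
        = ((π / Real.sin (π * a) : ℝ) : ℂ) := by
      have h1a : ((1 - a : ℝ) : ℂ) = 1 - (a:ℂ) := by push_cast; ring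
      rw [← h1a, Complex.Gamma_ofReal, Complex.Gamma_ofReal, ← Complex.ofReal_mul,
        Real.Gamma_mul_Gamma_one_sub]
    rw [← hb, ← hg, hr]
  exact_mod_cast key

lemma int_mellin_Ioi {a : ℝ} (h0 : 0 < a) (h1 : a < 1) :
    ∫ x in Set.Ioi (0:ℝ), x ^ (a-1) / (1+x) = π / Real.sin (π * a) := by
  have himg : (fun s : ℝ => s / (1 - s)) '' Set.Ioo 0 1 = Set.Ioi 0 := by
    ext y
    constructor
    · rintro ⟨s, ⟨hs0, hs1⟩, rfl⟩
      exact div_pos hs0 (by linarith)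
    · intro hy
      refine ⟨y / (1 + y), ⟨div_pos hy (by linarith [hy.out]), ?_⟩, ?_⟩
      · rw [div_lt_one (by linarith [hy.out])]; linarith [hy.out]
      · have h1y : (0:ℝ) < 1 + y := by linarith [hy.out]
        field_simp
        ring
  have hderiv : ∀ s ∈ Set.Ioo (0:ℝ) 1,
      HasDerivWithinAt (fun s : ℝ => s / (1 - s)) ((1 - s)⁻¹ ^ 2) (Set.Ioo 0 1) s := by
    intro s hs
    have hne : (1 : ℝ) - s ≠ 0 := by have := hs.2; intro h; linarith [hs.2]
    have := ((hasDerivAt_id s).div ((hasDerivAt_const s 1).sub (hasDerivAt_id s)) hne)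
    refine this.hasDerivWithinAt.congr_deriv ?_
    simp only [id, Pi.sub_apply]
    field_simp
    ring
  have hinj : Set.InjOn (fun s : ℝ => s / (1 - s)) (Set.Ioo 0 1) := by
    intro s hs t ht h
    have hs1 : (1:ℝ) - s ≠ 0 := by have := hs.2; intro hh; linarith
    have ht1 : (1:ℝ) - t ≠ 0 := by have := ht.2; intro hh; linarith
    field_simp at h
    linarith
  have := MeasureTheory.integral_image_eq_integral_abs_deriv_smul measurableSet_Ioo hderiv hinj
    (fun y => y ^ (a-1) / (1+y))
  rw [himg] at this
  rw [this]
  rw [show (∫ s in Set.Ioo (0:ℝ) 1, |(1 - s)⁻¹ ^ 2| •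
      ((s / (1-s)) ^ (a-1) / (1 + s / (1-s))))
      = ∫ s in Set.Ioo (0:ℝ) 1, s ^ (a-1) * (1-s) ^ (-a) from ?_]
  · exact beta_real h0 h1
  refine MeasureTheory.setIntegral_congr_fun measurableSet_Ioo (fun s hs => ?_)
  obtain ⟨hs0, hs1⟩ := hs
  have hu : (0:ℝ) < 1 - s := by linarith
  have h1 : 1 + s / (1 - s) = (1 - s)⁻¹ := by field_simp; ring
  have e1 : ((1-s)⁻¹ ^ 2 : ℝ) = (1-s) ^ (-2:ℝ) := by
    rw [inv_pow, ← Real.rpow_natCast (1-s) 2, ← Real.rpow_neg hu.le]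
    norm_num
  have e2 : (s/(1-s)) ^ (a-1) = s ^ (a-1) * (1-s) ^ (-(a-1)) := by
    rw [Real.div_rpow hs0.le hu.le, Real.rpow_neg hu.le, div_eq_mul_inv]
  have e3 : (1-s) ^ (-2:ℝ) * (1-s) ^ (-(a-1)) * (1-s) = (1-s) ^ (-a) := by
    nth_rewrite 3 [← Real.rpow_one (1-s)]
    rw [← Real.rpow_add hu, ← Real.rpow_add hu]
    congr 1
    ring
  rw [h1, e2, smul_eq_mul, abs_of_nonneg (by positivity), div_eq_mul_inv, inv_inv, e1, ← e3]
  ring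
lemma int_one_div_one_add_rpow {m : ℝ} (hm : 1 < m) :
    ∫ x in Set.Ioi (0:ℝ), 1 / (1 + x ^ m) = (π / m) / Real.sin (π / m) := by
  have hm0 : (0:ℝ) < m := by linarith
  have key := MeasureTheory.integral_comp_rpow_Ioi
    (fun u => (1/m) * (u ^ (1/m - 1) / (1+u))) (p := m) hm0.ne'
  have congr1 : (∫ x in Set.Ioi (0:ℝ),
      (|m| * x ^ (m - 1)) • ((1/m) * ((x ^ m) ^ (1/m - 1) / (1 + x ^ m))))
      = ∫ x in Set.Ioi (0:ℝ), 1 / (1 + x ^ m) := by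
    refine MeasureTheory.setIntegral_congr_fun measurableSet_Ioi (fun x hx => ?_)
    have hx0 : (0:ℝ) < x := hx
    have h1 : ((x ^ m) ^ (1/m - 1) : ℝ) = x ^ (1 - m) := by
      rw [← Real.rpow_mul hx0.le]
      congr 1
      field_simp
    rw [h1, smul_eq_mul, abs_of_pos hm0]
    rw [show m * x ^ (m-1) * (1/m * (x ^ (1-m) / (1 + x ^ m)))
        = (x ^ (m-1) * x ^ (1-m)) * (m * (1/m)) / (1 + x ^ m) from by ring,
      ← Real.rpow_add hx0]
    norm_num
    field_simp
  have ha0 : (0:ℝ) < 1/m := by positivity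
  have ha1 : 1/m < 1 := by rw [div_lt_one hm0]; linarith
  rw [← congr1, key, MeasureTheory.integral_const_mul,
    int_mellin_Ioi ha0 ha1, mul_one_div]
  ring

lemma integrable_one_div_one_add_rpow {m : ℝ} (hm : 1 < m) :
    MeasureTheory.IntegrableOn (fun x => 1 / (1 + x ^ m)) (Set.Ioi (0:ℝ)) := by
  have hm0 : (0:ℝ) < m := by linarith
  have hcont : ContinuousOn (fun x : ℝ => 1 / (1 + x ^ m)) (Set.Ici 0) := by
    refine ContinuousOn.div continuousOn_const ?_ ?_
    · exact continuousOn_const.add (fun x hx =>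
        (Real.continuousAt_rpow_const x m (Or.inr hm0.le)).continuousWithinAt)
    · intro x hx
      have : (0:ℝ) ≤ x ^ m := Real.rpow_nonneg hx m
      positivity
  have h1 : MeasureTheory.IntegrableOn (fun x => 1 / (1 + x ^ m)) (Set.Ioc (0:ℝ) 1) := by
    refine (hcont.mono ?_).integrableOn_compact isCompact_Icc |>.mono_set Set.Ioc_subset_Icc_self
    exact fun x hx => hx.1
  have h2 : MeasureTheory.IntegrableOn (fun x => 1 / (1 + x ^ m)) (Set.Ioi (1:ℝ)) := by
    have hint : MeasureTheory.IntegrableOn (fun x : ℝ => x ^ (-m)) (Set.Ioi (1:ℝ)) :=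
      integrableOn_Ioi_rpow_of_lt (by linarith) one_pos
    refine MeasureTheory.Integrable.mono hint ?_ ?_
    · refine (hcont.mono (fun x hx => ?_)).aestronglyMeasurable measurableSet_Ioi
      exact le_trans zero_le_one (le_of_lt (Set.mem_Ioi.mp hx))
    · filter_upwards [MeasureTheory.ae_restrict_mem measurableSet_Ioi] with x hx
      have hx1 : (1:ℝ) < x := hx
      have hx0 : (0:ℝ) < x := by linarith
      have hpow : (0:ℝ) < x ^ m := Real.rpow_pos_of_pos hx0 m
      rw [Real.norm_eq_abs, Real.norm_eq_abs, abs_of_pos (by positivity),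
        abs_of_pos (Real.rpow_pos_of_pos hx0 _), Real.rpow_neg hx0.le]
      rw [one_div, inv_le_inv₀ (by linarith) hpow]
      linarith
  have := MeasureTheory.IntegrableOn.union h1 h2
  rwa [Set.Ioc_union_Ioi_eq_Ioi zero_le_one] at this
lemma scaled_int {m T Cc : ℝ} (hm : 1 < m) (hT : 0 < T) (hC : 0 < Cc) :
    MeasureTheory.IntegrableOn (fun x => Cc / (Cc + T * x ^ m)) (Set.Ioi (0:ℝ)) ∧
    ∫ x in Set.Ioi (0:ℝ), Cc / (Cc + T * x ^ m)
      = (Cc / T) ^ (1/m) * ((π / m) / Real.sin (π / m)) := by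
  have hm0 : (0:ℝ) < m := by linarith
  set c : ℝ := (Cc / T) ^ (1/m) with hc_def
  have hc : 0 < c := Real.rpow_pos_of_pos (div_pos hC hT) _
  have hcm : c ^ m = Cc / T := by
    rw [hc_def, ← Real.rpow_mul (div_pos hC hT).le, one_div,
      inv_mul_cancel₀ hm0.ne', Real.rpow_one]
  have hFG : ∀ x ∈ Set.Ioi (0:ℝ),
      Cc / (Cc + T * x ^ m) = 1 / (1 + (c⁻¹ * x) ^ m) := by
    intro x hx
    have hx0 : (0:ℝ) < x := hx
    rw [Real.mul_rpow (by positivity) hx0.le, Real.inv_rpow hc.le, hcm]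
    rw [div_eq_div_iff (by positivity) (by positivity)]
    have hTC : (Cc / T)⁻¹ = T / Cc := by field_simp
    rw [hTC]
    field_simp
  constructor
  · refine MeasureTheory.IntegrableOn.congr_fun ?_
      (fun x hx => (hFG x hx).symm) measurableSet_Ioi
    have := (MeasureTheory.integrableOn_Ioi_comp_mul_left_iff
      (fun x => 1 / (1 + x ^ m)) 0 (inv_pos.mpr hc)).mpr
    simp only [mul_zero] at this
    exact this (integrable_one_div_one_add_rpow hm)
  · rw [MeasureTheory.setIntegral_congr_fun measurableSet_Ioi hFG]
    have := MeasureTheory.integral_comp_mul_left_Ioi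
      (fun x => 1 / (1 + x ^ m)) 0 (inv_pos.mpr hc)
    simp only [mul_zero] at this
    rw [this, int_one_div_one_add_rpow hm, inv_inv, smul_eq_mul]
/-- Effective dimension under polynomial spectral decay: if the squared singular values of `A`
(the eigenvalues of `AᵀA`), arranged via a permutation `e`, satisfy
`σⱼ²(A) ≤ C·j^{−2β}` for `j = 1, …, p` with integer `β ≥ 1`, then for `ν > 0`,
`d_eff^ν(A) = ∑ⱼ σⱼ²/(σⱼ² + nν) ≤ (π/(2β))/sin(π/(2β)) · (C/(nν))^{1/(2β)}`. -/
theorem effective_dimension_polynomial_decay {n p : ℕ} (hn : 0 < n)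
    (A : Matrix (Fin n) (Fin p) ℝ)
    (β : ℕ) (hβ : 1 ≤ β) (Cc ν : ℝ) (hC : 0 < Cc) (hν : 0 < ν)
    (e : Equiv.Perm (Fin p))
    (hdecay : ∀ j : Fin p,
      (Matrix.isHermitian_transpose_mul_self A).eigenvalues (e j)
        ≤ Cc * ((j : ℝ) + 1) ^ (-(2 * (β : ℝ)))) :
    ∑ j, (Matrix.isHermitian_transpose_mul_self A).eigenvalues j /
        ((Matrix.isHermitian_transpose_mul_self A).eigenvalues j + (n : ℝ) * ν)
      ≤ (Real.pi / (2 * (β : ℝ))) / Real.sin (Real.pi / (2 * (β : ℝ)))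
          * (Cc / ((n : ℝ) * ν)) ^ ((1 : ℝ) / (2 * (β : ℝ))) := by
  set eig := (Matrix.isHermitian_transpose_mul_self A).eigenvalues with heig
  set m : ℝ := 2 * (β : ℝ) with hm_def
  have hm : (1:ℝ) < m := by
    have : (1:ℝ) ≤ (β:ℝ) := by exact_mod_cast hβ
    rw [hm_def]; linarith
  set T : ℝ := (n : ℝ) * ν with hT_def
  have hT : 0 < T := by positivity
  set F : ℝ → ℝ := fun x => Cc / (Cc + T * x ^ m) with hF_def
  -- termwise bound
  have hterm : ∀ j : Fin p, eig (e j) / (eig (e j) + T) ≤ F ((j:ℝ) + 1) := by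
    intro j
    have hnn : 0 ≤ eig (e j) := Matrix.eigenvalues_conjTranspose_mul_self_nonneg A (e j)
    have hdj := hdecay j
    have hy : (0:ℝ) < ((j:ℝ) + 1) ^ m := Real.rpow_pos_of_pos (by positivity) m
    have hb : (0:ℝ) < Cc * ((j:ℝ) + 1) ^ (-m) := by
      have := Real.rpow_pos_of_pos (show (0:ℝ) < (j:ℝ)+1 by positivity) (-m)
      positivity
    have step1 : eig (e j) / (eig (e j) + T)
        ≤ (Cc * ((j:ℝ) + 1) ^ (-m)) / (Cc * ((j:ℝ) + 1) ^ (-m) + T) := by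
      rw [div_le_div_iff₀ (by positivity) (by positivity)]
      nlinarith [hdj, hT]
    refine step1.trans (le_of_eq ?_)
    rw [hF_def]
    have hneg : ((j:ℝ) + 1) ^ (-m) = (((j:ℝ) + 1) ^ m)⁻¹ :=
      Real.rpow_neg (by positivity) m
    rw [hneg, div_eq_div_iff (by positivity) (by positivity)]
    field_simp
  -- reindex the sum
  have hre : ∑ j, eig j / (eig j + T) = ∑ j, eig (e j) / (eig (e j) + T) :=
    (Equiv.sum_comp e (fun j => eig j / (eig j + T))).symm
  have hsum1 : ∑ j, eig j / (eig j + T) ≤ ∑ j : Fin p, F ((j:ℝ) + 1) := by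
    rw [hre]; exact Finset.sum_le_sum (fun j _ => hterm j)
  -- antitone
  have hanti : AntitoneOn F (Set.Icc (0:ℝ) (0 + (p:ℝ))) := by
    intro x hx y hy hxy
    have hx0 : (0:ℝ) ≤ x := hx.1
    have hxm : x ^ m ≤ y ^ m := Real.rpow_le_rpow hx0 hxy (by linarith)
    have h1 : (0:ℝ) < Cc + T * x ^ m := by
      have : (0:ℝ) ≤ x ^ m := Real.rpow_nonneg hx0 m
      positivity
    rw [hF_def]
    dsimp only
    gcongr
  obtain ⟨hint, hval⟩ := scaled_int (T := T) (Cc := Cc) hm hT hC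
  -- sum ≤ interval integral
  have hsum2 : ∑ i ∈ Finset.range p, F ((0:ℝ) + ((i:ℕ) + 1 : ℕ))
      ≤ ∫ x in (0:ℝ)..((0:ℝ) + (p:ℝ)), F x := by
    exact_mod_cast AntitoneOn.sum_le_integral hanti
  have hsum3 : ∑ j : Fin p, F ((j:ℝ) + 1) ≤ ∫ x in (0:ℝ)..(p:ℝ), F x := by
    rw [Fin.sum_univ_eq_sum_range (fun i => F ((i:ℝ) + 1))]
    have : ∑ i ∈ Finset.range p, F ((i:ℝ) + 1)
        = ∑ i ∈ Finset.range p, F ((0:ℝ) + ((i:ℕ) + 1 : ℕ)) := by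
      refine Finset.sum_congr rfl (fun i _ => ?_)
      congr 1
      push_cast
      ring
    rw [this]
    simpa using hsum2
  -- interval integral ≤ full integral
  have hsub : ∫ x in (0:ℝ)..(p:ℝ), F x ≤ ∫ x in Set.Ioi (0:ℝ), F x := by
    rw [intervalIntegral.integral_of_le (by positivity)]
    refine MeasureTheory.setIntegral_mono_set hint ?_ ?_
    · filter_upwards [MeasureTheory.ae_restrict_mem measurableSet_Ioi] with x hx
      have hx0 : (0:ℝ) < x := hx
      have : (0:ℝ) ≤ x ^ m := Real.rpow_nonneg hx0.le m
      rw [hF_def]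
      positivity
    · exact HasSubset.Subset.eventuallyLE Set.Ioc_subset_Ioi_self
  calc ∑ j, eig j / (eig j + T) ≤ ∫ x in Set.Ioi (0:ℝ), F x :=
        le_trans hsum1 (le_trans hsum3 hsub)
    _ = (Cc / T) ^ (1/m) * ((π / m) / Real.sin (π / m)) := hval
    _ = (π / m) / Real.sin (π / m) * (Cc / T) ^ ((1:ℝ)/m) := by ring
end
end

section
/- Let F(w) = (1/n)∑ᵢ φᵢ(aᵢᵀw) + (ν/2)‖w‖² be a GLM with ν > 0, each φᵢ twice differentiable convex with sup_x φᵢ''(x) ≤ B. Then the Hessian dissimilarity satisfies τ⋆^ν ≤ 1 + χ⋆^ν · d_eff^{ν/B}(A), where χ⋆^ν = sup_w χ^ν(Φ''(Aw)^{1/2}A) is the global ridge leverage coherence. -/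
open Matrix

noncomputable section

namespace HDGlm

variable {n p : ℕ}

lemma herm_dot {P : Matrix (Fin p) (Fin p) ℝ} (hP : P.IsHermitian) (x y : Fin p → ℝ) :
    x ⬝ᵥ P *ᵥ y = y ⬝ᵥ P *ᵥ x := by
  rw [Matrix.dotProduct_mulVec, ← Matrix.mulVec_transpose]
  rw [show Pᵀ = P from by rw [← conjTranspose_eq_transpose_of_trivial]; exact hP]
  exact dotProduct_comm _ _

lemma psd_cs {P : Matrix (Fin p) (Fin p) ℝ} (hP : P.PosSemidef) (u x : Fin p → ℝ) :
    (u ⬝ᵥ P *ᵥ x) ^ 2 ≤ (u ⬝ᵥ P *ᵥ u) * (x ⬝ᵥ P *ᵥ x) := by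
  have h : ∀ t : ℝ, 0 ≤ (x ⬝ᵥ P *ᵥ x) * (t * t) + (2 * (u ⬝ᵥ P *ᵥ x)) * t + (u ⬝ᵥ P *ᵥ u) := by
    intro t
    have h0 := hP.dotProduct_mulVec_nonneg (t • x + u)
    simp only [star_trivial] at h0
    simp only [Matrix.mulVec_add, Matrix.mulVec_smul, dotProduct_add, add_dotProduct,
      dotProduct_smul, smul_dotProduct, smul_eq_mul] at h0
    rw [herm_dot hP.1 x u] at h0
    nlinarith [h0]
  have := discrim_le_zero h
  rw [discrim] at this
  nlinarith [this]

lemma G_eq_sum (a : Fin n → Fin p → ℝ) (d : Fin n → ℝ) :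
    (Matrix.of a)ᴴ * Matrix.diagonal d * Matrix.of a
      = ∑ k, d k • vecMulVec (a k) (a k) := by
  ext i j
  simp [Matrix.mul_apply, Matrix.diagonal, Matrix.vecMulVec_apply, Matrix.of_apply,
    Finset.sum_apply, Finset.mul_sum, Finset.sum_mul, mul_comm, mul_assoc, mul_left_comm,
    Finset.sum_ite_eq, Finset.sum_ite_eq', Matrix.sum_apply, Matrix.smul_apply, smul_eq_mul]

lemma quad_vvT (v x y : Fin p → ℝ) :
    x ⬝ᵥ (vecMulVec v v) *ᵥ y = (v ⬝ᵥ x) * (v ⬝ᵥ y) := by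
  simp [Matrix.mulVec, dotProduct, Matrix.vecMulVec_apply, Finset.mul_sum, Finset.sum_mul]
  rw [Finset.sum_comm]
  apply Finset.sum_congr rfl; intro i _
  apply Finset.sum_congr rfl; intro j _
  ring

lemma trace_P_vvT (P : Matrix (Fin p) (Fin p) ℝ) (v : Fin p → ℝ) :
    (P * vecMulVec v v).trace = v ⬝ᵥ P *ᵥ v := by
  simp [Matrix.trace, Matrix.diag, Matrix.mul_apply, Matrix.vecMulVec_apply, Matrix.mulVec,
    dotProduct, Finset.mul_sum]
  apply Finset.sum_congr rfl; intro i _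
  apply Finset.sum_congr rfl; intro j _
  ring

lemma trace_eq_sum_single (Q : Matrix (Fin p) (Fin p) ℝ) :
    Q.trace = ∑ i, (Pi.single i 1 : Fin p → ℝ) ⬝ᵥ Q *ᵥ (Pi.single i 1) := by
  simp [Matrix.trace, Matrix.diag, Matrix.mulVec_single, single_dotProduct]

lemma my_sum_mulVec {ι : Type*} (s : Finset ι) (f : ι → Matrix (Fin p) (Fin p) ℝ)
    (v : Fin p → ℝ) : (∑ k ∈ s, f k) *ᵥ v = ∑ k ∈ s, f k *ᵥ v := by
  ext i
  simp [Matrix.mulVec, dotProduct, Finset.sum_apply, Matrix.sum_apply, Finset.sum_mul]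
  rw [Finset.sum_comm]

lemma my_dot_sum {ι : Type*} (s : Finset ι) (f : ι → Fin p → ℝ) (v : Fin p → ℝ) :
    v ⬝ᵥ (∑ k ∈ s, f k) = ∑ k ∈ s, v ⬝ᵥ f k := by
  simp [dotProduct, Finset.sum_apply, Finset.mul_sum]
  rw [Finset.sum_comm]

lemma quad_G (a : Fin n → Fin p → ℝ) (d : Fin n → ℝ) (x y : Fin p → ℝ) :
    x ⬝ᵥ ((Matrix.of a)ᴴ * Matrix.diagonal d * Matrix.of a) *ᵥ y
      = ∑ k, d k * ((a k ⬝ᵥ x) * (a k ⬝ᵥ y)) := by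
  rw [G_eq_sum, my_sum_mulVec, my_dot_sum]
  refine Finset.sum_congr rfl fun k _ => ?_
  rw [Matrix.smul_mulVec, dotProduct_smul, quad_vvT, smul_eq_mul]

lemma G_herm (a : Fin n → Fin p → ℝ) (d : Fin n → ℝ) :
    ((Matrix.of a)ᴴ * Matrix.diagonal d * Matrix.of a).IsHermitian :=
  Matrix.isHermitian_conjTranspose_mul_mul _ (Matrix.isHermitian_diagonal d)

lemma G_psd (a : Fin n → Fin p → ℝ) {d : Fin n → ℝ} (hd : ∀ k, 0 ≤ d k) :
    ((Matrix.of a)ᴴ * Matrix.diagonal d * Matrix.of a).PosSemidef := by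
  refine .of_dotProduct_mulVec_nonneg (G_herm a d) fun x => ?_
  rw [star_trivial, quad_G]
  exact Finset.sum_nonneg fun k _ => mul_nonneg (hd k) (mul_self_nonneg _)

lemma herm_smul {A : Matrix (Fin p) (Fin p) ℝ} (hA : A.IsHermitian) (c : ℝ) :
    (c • A).IsHermitian := by
  unfold Matrix.IsHermitian at *
  rw [Matrix.conjTranspose_smul, hA, star_trivial]

lemma smul_one_posDef {c : ℝ} (hc : 0 < c) :
    (c • (1 : Matrix (Fin p) (Fin p) ℝ)).PosDef := by
  rw [Matrix.smul_one_eq_diagonal]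
  exact Matrix.PosDef.diagonal fun _ => hc

lemma pd_mul_inv {M : Matrix (Fin p) (Fin p) ℝ} (hM : M.PosDef) : M * M⁻¹ = 1 :=
  Matrix.mul_nonsing_inv _ ((Matrix.isUnit_iff_isUnit_det _).1 hM.isUnit)

lemma pd_inv_mul {M : Matrix (Fin p) (Fin p) ℝ} (hM : M.PosDef) : M⁻¹ * M = 1 :=
  Matrix.nonsing_inv_mul _ ((Matrix.isUnit_iff_isUnit_det _).1 hM.isUnit)

lemma inv_quad_nonneg {M : Matrix (Fin p) (Fin p) ℝ} (hM : M.PosDef) (v : Fin p → ℝ) :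
    0 ≤ v ⬝ᵥ M⁻¹ *ᵥ v := by
  simpa using hM.inv.posSemidef.dotProduct_mulVec_nonneg v

lemma rank_one_cs {M : Matrix (Fin p) (Fin p) ℝ} (hM : M.PosDef) (v x : Fin p → ℝ) :
    (v ⬝ᵥ x) ^ 2 ≤ (v ⬝ᵥ M⁻¹ *ᵥ v) * (x ⬝ᵥ M *ᵥ x) := by
  have h := psd_cs hM.posSemidef (M⁻¹ *ᵥ v) x
  have hMu : M *ᵥ (M⁻¹ *ᵥ v) = v := by
    rw [Matrix.mulVec_mulVec, pd_mul_inv hM, Matrix.one_mulVec]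
  have h1 : (M⁻¹ *ᵥ v) ⬝ᵥ M *ᵥ x = v ⬝ᵥ x := by
    rw [herm_dot hM.isHermitian, hMu, dotProduct_comm]
  have h2 : (M⁻¹ *ᵥ v) ⬝ᵥ M *ᵥ (M⁻¹ *ᵥ v) = v ⬝ᵥ M⁻¹ *ᵥ v := by
    rw [hMu, dotProduct_comm]
  rw [h1, h2] at h
  exact h

lemma inv_quad_antitone {X Y : Matrix (Fin p) (Fin p) ℝ} (hX : X.PosDef)
    (hXY : (Y - X).PosSemidef) (z : Fin p → ℝ) :
    z ⬝ᵥ Y⁻¹ *ᵥ z ≤ z ⬝ᵥ X⁻¹ *ᵥ z := by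
  have hY : Y.PosDef := by
    have := hX.add_posSemidef hXY
    rwa [add_sub_cancel] at this
  set u := Y⁻¹ *ᵥ z with hu
  have hYu : Y *ᵥ u = z := by
    rw [hu, Matrix.mulVec_mulVec, pd_mul_inv hY, Matrix.one_mulVec]
  have hs : z ⬝ᵥ u = u ⬝ᵥ Y *ᵥ u := by rw [hYu, dotProduct_comm]
  have hs0 : 0 ≤ z ⬝ᵥ u := by
    rw [hs]; simpa using hY.posSemidef.dotProduct_mulVec_nonneg u
  have hXu : u ⬝ᵥ X *ᵥ u ≤ u ⬝ᵥ Y *ᵥ u := by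
    have h0 := hXY.dotProduct_mulVec_nonneg u
    simp only [star_trivial, Matrix.sub_mulVec, dotProduct_sub] at h0
    linarith
  have hcs := rank_one_cs hX z u
  have hinv0 : 0 ≤ z ⬝ᵥ X⁻¹ *ᵥ z := inv_quad_nonneg hX z
  show z ⬝ᵥ u ≤ z ⬝ᵥ X⁻¹ *ᵥ z
  rcases hs0.eq_or_lt with h | h
  · rw [← h]; exact hinv0
  · nlinarith [hcs, hXu, hs, hinv0]

lemma trace_inv_antitone {X Y : Matrix (Fin p) (Fin p) ℝ} (hX : X.PosDef)
    (hXY : (Y - X).PosSemidef) : Y⁻¹.trace ≤ X⁻¹.trace := by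
  rw [trace_eq_sum_single Y⁻¹, trace_eq_sum_single X⁻¹]
  exact Finset.sum_le_sum fun i _ => inv_quad_antitone hX hXY _

lemma sum_l_eq (a : Fin n → Fin p → ℝ) (d : Fin n → ℝ) (c : ℝ)
    (hM : ((Matrix.of a)ᴴ * Matrix.diagonal d * Matrix.of a
        + c • (1 : Matrix (Fin p) (Fin p) ℝ)).PosDef) :
    ∑ k, d k * (a k ⬝ᵥ ((Matrix.of a)ᴴ * Matrix.diagonal d * Matrix.of a
        + c • (1 : Matrix (Fin p) (Fin p) ℝ))⁻¹ *ᵥ a k)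
      = (p : ℝ) - c * ((Matrix.of a)ᴴ * Matrix.diagonal d * Matrix.of a
        + c • (1 : Matrix (Fin p) (Fin p) ℝ))⁻¹.trace := by
  set M := (Matrix.of a)ᴴ * Matrix.diagonal d * Matrix.of a
      + c • (1 : Matrix (Fin p) (Fin p) ℝ) with hMdef
  have h1 : ∑ k, d k * (a k ⬝ᵥ M⁻¹ *ᵥ a k)
      = (M⁻¹ * ((Matrix.of a)ᴴ * Matrix.diagonal d * Matrix.of a)).trace := by
    rw [G_eq_sum, Matrix.mul_sum, Matrix.trace_sum]
    refine (Finset.sum_congr rfl fun k _ => ?_).symm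
    rw [Matrix.mul_smul, Matrix.trace_smul, trace_P_vvT, smul_eq_mul]
  rw [h1, show (Matrix.of a)ᴴ * Matrix.diagonal d * Matrix.of a
      = M - c • (1 : Matrix (Fin p) (Fin p) ℝ) from by rw [hMdef]; abel]
  rw [Matrix.mul_sub, Matrix.trace_sub, pd_inv_mul hM, Matrix.mul_smul, mul_one,
    Matrix.trace_smul, Matrix.trace_one]
  simp [Fintype.card_fin]

lemma herm_vvT (v : Fin p → ℝ) : (vecMulVec v v).IsHermitian := by
  unfold Matrix.IsHermitian
  ext i j
  simp [Matrix.conjTranspose_apply, Matrix.vecMulVec_apply, mul_comm]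

lemma dot_self_nonneg (x : Fin p → ℝ) : 0 ≤ x ⬝ᵥ x :=
  Finset.sum_nonneg fun i _ => mul_self_nonneg _

/-- membership quadratic bound -/
lemma main_psd {B ν : ℝ} (a : Fin n → Fin p → ℝ) (d : Fin n → ℝ) (s : ℝ)
    (hν : 0 < ν) (hn : 0 < n) (hB : 0 < B)
    (hd0 : ∀ k, 0 ≤ d k) (i : Fin n)
    (hs : (n : ℝ) * (d i * (a i ⬝ᵥ ((Matrix.of a)ᴴ * Matrix.diagonal d * Matrix.of a
        + ((n:ℝ) * ν) • (1 : Matrix (Fin p) (Fin p) ℝ))⁻¹ *ᵥ a i)) ≤ s) :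
    (((1 + s) • ((n : ℝ)⁻¹ • ((Matrix.of a)ᴴ * Matrix.diagonal d * Matrix.of a)
          + ν • (1 : Matrix (Fin p) (Fin p) ℝ))
        - (d i • vecMulVec (a i) (a i)
          + ν • (1 : Matrix (Fin p) (Fin p) ℝ)))).PosSemidef := by
  have hn' : (0:ℝ) < n := by exact_mod_cast hn
  have hnν : (0:ℝ) < (n:ℝ) * ν := by positivity
  set G : Matrix (Fin p) (Fin p) ℝ := (Matrix.of a)ᴴ * Matrix.diagonal d * Matrix.of a with hG
  set M : Matrix (Fin p) (Fin p) ℝ := G + ((n:ℝ) * ν) • 1 with hM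
  have hMpd : M.PosDef := Matrix.PosDef.posSemidef_add (G_psd a hd0) (smul_one_posDef hnν)
  refine Matrix.PosSemidef.of_dotProduct_mulVec_nonneg ?_ fun x => ?_
  · exact (herm_smul ((herm_smul (G_herm a d) _).add
        (herm_smul Matrix.isHermitian_one _)) _).sub
      ((herm_smul (herm_vvT _) _).add (herm_smul Matrix.isHermitian_one _))
  · rw [star_trivial]
    simp only [Matrix.sub_mulVec, Matrix.add_mulVec, Matrix.smul_mulVec,
      Matrix.one_mulVec, dotProduct_sub, dotProduct_add, dotProduct_smul, smul_eq_mul]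
    rw [quad_G a d x x, quad_vvT]
    set Q : ℝ := ∑ k, d k * ((a k ⬝ᵥ x) * (a k ⬝ᵥ x)) with hQ
    set xx : ℝ := x ⬝ᵥ x with hxxdef
    set l : ℝ := d i * (a i ⬝ᵥ M⁻¹ *ᵥ a i) with hl
    have hQ0 : 0 ≤ Q := Finset.sum_nonneg fun k _ => mul_nonneg (hd0 k) (mul_self_nonneg _)
    have hxx : 0 ≤ xx := dot_self_nonneg x
    have hl0 : 0 ≤ l := mul_nonneg (hd0 i) (inv_quad_nonneg hMpd _)
    have hQM : x ⬝ᵥ M *ᵥ x = Q + (n:ℝ) * ν * xx := by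
      rw [hM, Matrix.add_mulVec, dotProduct_add, Matrix.smul_mulVec,
        Matrix.one_mulVec, dotProduct_smul, smul_eq_mul, quad_G a d x x, mul_assoc]
    have hQQ0 : 0 ≤ Q + (n:ℝ) * ν * xx := by positivity
    have key1 : d i * ((a i ⬝ᵥ x) * (a i ⬝ᵥ x)) ≤ l * (Q + (n:ℝ) * ν * xx) := by
      have h := mul_le_mul_of_nonneg_left (rank_one_cs hMpd (a i) x) (hd0 i)
      rw [hQM] at h
      nlinarith [h]
    have key2 : (n : ℝ) * l ≤ s := hs
    have hA1 : (n:ℝ) * (d i * ((a i ⬝ᵥ x) * (a i ⬝ᵥ x)))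
        ≤ (n:ℝ) * (l * (Q + (n:ℝ) * ν * xx)) :=
      mul_le_mul_of_nonneg_left key1 hn'.le
    have hA2 : ((n:ℝ) * l) * (Q + (n:ℝ) * ν * xx) ≤ s * (Q + (n:ℝ) * ν * xx) :=
      mul_le_mul_of_nonneg_right key2 hQQ0
    have final' : 0 ≤ (1 + s) * (Q + (n:ℝ) * ν * xx)
        - ((n:ℝ) * (d i * ((a i ⬝ᵥ x) * (a i ⬝ᵥ x))) + (n:ℝ) * ν * xx) := by
      nlinarith [hA1, hA2, hQ0]
    have expand : (n:ℝ) * ((1 + s) * ((n:ℝ)⁻¹ * Q + ν * xx)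
          - (d i * ((a i ⬝ᵥ x) * (a i ⬝ᵥ x)) + ν * xx))
        = (1 + s) * (Q + (n:ℝ) * ν * xx)
          - ((n:ℝ) * (d i * ((a i ⬝ᵥ x) * (a i ⬝ᵥ x))) + (n:ℝ) * ν * xx) := by
      field_simp
    have final2 : 0 ≤ (n:ℝ) * ((1 + s) * ((n:ℝ)⁻¹ * Q + ν * xx)
        - (d i * ((a i ⬝ᵥ x) * (a i ⬝ᵥ x)) + ν * xx)) := by rw [expand]; exact final'
    by_contra hcon
    push_neg at hcon
    nlinarith [final2, hn', hcon]

lemma sum_l_le {B ν : ℝ} (a : Fin n → Fin p → ℝ) (d : Fin n → ℝ)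
    (hν : 0 < ν) (hn : 0 < n) (hB : 0 < B)
    (hd0 : ∀ k, 0 ≤ d k) (hdB : ∀ k, d k ≤ B) :
    ∑ k, d k * (a k ⬝ᵥ ((Matrix.of a)ᴴ * Matrix.diagonal d * Matrix.of a
        + ((n:ℝ) * ν) • (1 : Matrix (Fin p) (Fin p) ℝ))⁻¹ *ᵥ a k)
      ≤ ∑ k, a k ⬝ᵥ ((Matrix.of a)ᴴ * Matrix.of a
        + ((n:ℝ) * (ν / B)) • (1 : Matrix (Fin p) (Fin p) ℝ))⁻¹ *ᵥ a k := by
  have hn' : (0:ℝ) < n := by exact_mod_cast hn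
  have hnν : (0:ℝ) < (n:ℝ) * ν := by positivity
  have hnνB : (0:ℝ) < (n:ℝ) * (ν / B) := by positivity
  set M : Matrix (Fin p) (Fin p) ℝ := (Matrix.of a)ᴴ * Matrix.diagonal d * Matrix.of a
      + ((n:ℝ) * ν) • 1 with hM
  set N : Matrix (Fin p) (Fin p) ℝ := (Matrix.of a)ᴴ * Matrix.of a
      + ((n:ℝ) * (ν / B)) • 1 with hN
  have hNG : (Matrix.of a)ᴴ * Matrix.of a
      = (Matrix.of a)ᴴ * Matrix.diagonal (fun _ : Fin n => (1:ℝ)) * Matrix.of a := by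
    rw [Matrix.diagonal_one, Matrix.mul_one]
  have hMpd : M.PosDef :=
    Matrix.PosDef.posSemidef_add (G_psd a hd0) (smul_one_posDef hnν)
  have hNpd : N.PosDef := by
    rw [hN, hNG]
    exact Matrix.PosDef.posSemidef_add (G_psd a fun _ => zero_le_one) (smul_one_posDef hnνB)
  -- B • N in G-form
  have hconst : (Matrix.of a)ᴴ * Matrix.diagonal (fun _ : Fin n => B) * Matrix.of a
      = B • ((Matrix.of a)ᴴ * Matrix.of a) := by
    rw [← Matrix.smul_one_eq_diagonal, Matrix.mul_smul, Matrix.mul_one, Matrix.smul_mul]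
  have hBNform : B • N = (Matrix.of a)ᴴ * Matrix.diagonal (fun _ : Fin n => B) * Matrix.of a
      + ((n:ℝ) * ν) • 1 := by
    have hB0 : B ≠ 0 := hB.ne'
    rw [hN, smul_add, hconst, smul_smul,
      show B * ((n:ℝ) * (ν / B)) = (n:ℝ) * ν from by field_simp]
  have hdiff : (B • N - M).PosSemidef := by
    have heq : B • N - M = (Matrix.of a)ᴴ * Matrix.diagonal (fun k => B - d k) * Matrix.of a := by
      rw [hBNform, hM, add_sub_add_right_eq_sub, G_eq_sum, G_eq_sum, G_eq_sum,
        ← Finset.sum_sub_distrib]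
      exact Finset.sum_congr rfl fun k _ => by rw [← sub_smul]
    rw [heq]
    exact G_psd a fun k => sub_nonneg.2 (hdB k)
  have hBNpd : (B • N).PosDef := by
    rw [hBNform]
    exact Matrix.PosDef.posSemidef_add
      (G_psd a fun _ => hB.le) (smul_one_posDef hnν)
  -- trace identities
  have e1 := sum_l_eq a d ((n:ℝ) * ν) (by rw [← hM]; exact hMpd)
  have e2 := sum_l_eq a (fun _ : Fin n => (1:ℝ)) ((n:ℝ) * (ν / B))
      (by rw [← hNG, ← hN]; exact hNpd)
  rw [← hM] at e1
  rw [← hNG, ← hN] at e2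
  simp only [one_mul] at e2
  rw [e1, e2]
  have hinv : (B • N)⁻¹ = B⁻¹ • N⁻¹ := by
    apply Matrix.inv_eq_right_inv
    rw [Matrix.smul_mul, Matrix.mul_smul, pd_mul_inv hNpd, smul_smul,
      mul_inv_cancel₀ hB.ne', one_smul]
  have e4 : (B • N)⁻¹.trace ≤ M⁻¹.trace := trace_inv_antitone hMpd hdiff
  rw [hinv, Matrix.trace_smul, smul_eq_mul] at e4
  have harith : (n:ℝ) * (ν / B) * N⁻¹.trace = (n:ℝ) * ν * (B⁻¹ * N⁻¹.trace) := by
    field_simp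
  nlinarith [mul_le_mul_of_nonneg_left e4 hnν.le]

end HDGlm

/-- Hessian dissimilarity bound for GLMs. For `F(w) = (1/n)∑ᵢ φᵢ(aᵢᵀw) + (ν/2)‖w‖²` with
`0 ≤ φᵢ'' ≤ B`, the Hessian dissimilarity
`τ⋆^ν = sup_w maxᵢ λ₁((∇²f(w)+νI)^{−1/2}(∇²fᵢ(w)+νI)(∇²f(w)+νI)^{−1/2})`, expressed equivalently
as `inf {t | ∀ w i, ∇²fᵢ(w)+νI ⪯ t(∇²f(w)+νI)}`, satisfies `τ⋆^ν ≤ 1 + χ⋆^ν · d_eff^{ν/B}(A)`,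
where `χ⋆^ν` is (an upper bound on) the ridge leverage coherence
`χ^ν(Φ''(Aw)^{1/2}A) = (n/d_eff^ν(Φ''(Aw)^{1/2}A))·maxᵢ lᵢ^ν(Φ''(Aw)^{1/2}A)` over all `w`,
with ridge leverage scores `lᵢ^ν(Φ''(Aw)^{1/2}A) = φᵢ''(aᵢᵀw)·aᵢᵀ(AᵀΦ''(Aw)A + nνI)⁻¹aᵢ`. -/
theorem hessian_dissimilarity_glm {n p : ℕ} (hn : 0 < n)
    (a : Fin n → Fin p → ℝ) (φ φ' φ'' : Fin n → ℝ → ℝ)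
    (hφ' : ∀ i x, HasDerivAt (φ i) (φ' i x) x)
    (hφ'' : ∀ i x, HasDerivAt (φ' i) (φ'' i x) x)
    (B ν : ℝ) (hB : 0 < B) (hν : 0 < ν)
    (hφnn : ∀ i x, 0 ≤ φ'' i x) (hφB : ∀ i x, φ'' i x ≤ B)
    (χstar : ℝ)
    (hχ : ∀ w : Fin p → ℝ,
      ((n : ℝ) / ∑ i, φ'' i (a i ⬝ᵥ w) *
          (a i ⬝ᵥ ((Matrix.of a)ᴴ * Matrix.diagonal (fun j => φ'' j (a j ⬝ᵥ w)) * Matrix.of a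
              + ((n : ℝ) * ν) • (1 : Matrix (Fin p) (Fin p) ℝ))⁻¹.mulVec (a i)))
        * (⨆ i : Fin n, φ'' i (a i ⬝ᵥ w) *
            (a i ⬝ᵥ ((Matrix.of a)ᴴ * Matrix.diagonal (fun j => φ'' j (a j ⬝ᵥ w)) * Matrix.of a
                + ((n : ℝ) * ν) • (1 : Matrix (Fin p) (Fin p) ℝ))⁻¹.mulVec (a i)))
        ≤ χstar) :
    sInf {t : ℝ | ∀ (w : Fin p → ℝ) (i : Fin n),
        (t • ((n : ℝ)⁻¹ • ((Matrix.of a)ᴴ * Matrix.diagonal (fun j => φ'' j (a j ⬝ᵥ w))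
                * Matrix.of a) + ν • (1 : Matrix (Fin p) (Fin p) ℝ))
          - (φ'' i (a i ⬝ᵥ w) • vecMulVec (a i) (a i)
                + ν • (1 : Matrix (Fin p) (Fin p) ℝ))).PosSemidef}
      ≤ 1 + χstar * ∑ i, a i ⬝ᵥ ((Matrix.of a)ᴴ * Matrix.of a
          + ((n : ℝ) * (ν / B)) • (1 : Matrix (Fin p) (Fin p) ℝ))⁻¹.mulVec (a i) := by
  classical
  have hn' : (0:ℝ) < n := by exact_mod_cast hn
  have hnν : (0:ℝ) < (n:ℝ) * ν := by positivity
  have hnνB : (0:ℝ) < (n:ℝ) * (ν / B) := by positivity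
  -- notation
  set N : Matrix (Fin p) (Fin p) ℝ := (Matrix.of a)ᴴ * Matrix.of a
      + ((n:ℝ) * (ν / B)) • 1 with hN
  have hNG : (Matrix.of a)ᴴ * Matrix.of a
      = (Matrix.of a)ᴴ * Matrix.diagonal (fun _ : Fin n => (1:ℝ)) * Matrix.of a := by
    rw [Matrix.diagonal_one, Matrix.mul_one]
  have hNpd : N.PosDef := by
    rw [hN, hNG]
    exact Matrix.PosDef.posSemidef_add (HDGlm.G_psd a fun _ => zero_le_one)
      (HDGlm.smul_one_posDef hnνB)
  set deff : ℝ := ∑ i, a i ⬝ᵥ N⁻¹ *ᵥ a i with hdeff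
  have hdeff0 : 0 ≤ deff := Finset.sum_nonneg fun i _ => HDGlm.inv_quad_nonneg hNpd _
  have hMpd : ∀ w : Fin p → ℝ,
      ((Matrix.of a)ᴴ * Matrix.diagonal (fun j => φ'' j (a j ⬝ᵥ w)) * Matrix.of a
        + ((n:ℝ) * ν) • (1 : Matrix (Fin p) (Fin p) ℝ)).PosDef := fun w =>
    Matrix.PosDef.posSemidef_add (HDGlm.G_psd a fun k => hφnn k _) (HDGlm.smul_one_posDef hnν)
  -- leverage scores
  have hl0 : ∀ (w : Fin p → ℝ) (i : Fin n), 0 ≤ φ'' i (a i ⬝ᵥ w) *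
      (a i ⬝ᵥ ((Matrix.of a)ᴴ * Matrix.diagonal (fun j => φ'' j (a j ⬝ᵥ w)) * Matrix.of a
        + ((n:ℝ) * ν) • (1 : Matrix (Fin p) (Fin p) ℝ))⁻¹ *ᵥ a i) := fun w i =>
    mul_nonneg (hφnn i _) (HDGlm.inv_quad_nonneg (hMpd w) _)
  have hχ0 : 0 ≤ χstar := by
    refine le_trans ?_ (hχ 0)
    apply mul_nonneg
    · exact div_nonneg hn'.le (Finset.sum_nonneg fun i _ => hl0 0 i)
    · exact Real.iSup_nonneg fun i => hl0 0 i
  have hLle : ∀ w : Fin p → ℝ, (∑ i, φ'' i (a i ⬝ᵥ w) *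
      (a i ⬝ᵥ ((Matrix.of a)ᴴ * Matrix.diagonal (fun j => φ'' j (a j ⬝ᵥ w)) * Matrix.of a
        + ((n:ℝ) * ν) • (1 : Matrix (Fin p) (Fin p) ℝ))⁻¹ *ᵥ a i)) ≤ deff := fun w =>
    HDGlm.sum_l_le a _ hν hn hB (fun k => hφnn k _) (fun k => hφB k _)
  -- key bound on n * leverage
  have hnl : ∀ (w : Fin p → ℝ) (i : Fin n), (n:ℝ) * (φ'' i (a i ⬝ᵥ w) *
      (a i ⬝ᵥ ((Matrix.of a)ᴴ * Matrix.diagonal (fun j => φ'' j (a j ⬝ᵥ w)) * Matrix.of a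
        + ((n:ℝ) * ν) • (1 : Matrix (Fin p) (Fin p) ℝ))⁻¹ *ᵥ a i)) ≤ χstar * deff := by
    intro w i
    set l : Fin n → ℝ := fun i => φ'' i (a i ⬝ᵥ w) *
      (a i ⬝ᵥ ((Matrix.of a)ᴴ * Matrix.diagonal (fun j => φ'' j (a j ⬝ᵥ w)) * Matrix.of a
        + ((n:ℝ) * ν) • (1 : Matrix (Fin p) (Fin p) ℝ))⁻¹ *ᵥ a i) with hldef
    show (n:ℝ) * l i ≤ χstar * deff
    have hK : l i ≤ ⨆ j, l j := le_ciSup (Set.Finite.bddAbove (Set.finite_range l)) i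
    have hL0 : 0 ≤ ∑ j, l j := Finset.sum_nonneg fun j _ => hl0 w j
    have hχw : ((n:ℝ) / ∑ j, l j) * (⨆ j, l j) ≤ χstar := hχ w
    have hLd : (∑ j, l j) ≤ deff := hLle w
    rcases hL0.eq_or_lt with h0 | hL
    · have hli : l i = 0 := by
        have := (Finset.sum_eq_zero_iff_of_nonneg fun j _ => hl0 w j).1 h0.symm
        exact this i (Finset.mem_univ i)
      rw [hli, mul_zero]
      exact mul_nonneg hχ0 hdeff0
    · have h1 : (n:ℝ) * l i ≤ (n:ℝ) * ⨆ j, l j := mul_le_mul_of_nonneg_left hK hn'.le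
      have h2 : (n:ℝ) * (⨆ j, l j) = ((n:ℝ) / (∑ j, l j) * ⨆ j, l j) * (∑ j, l j) := by
        field_simp
      have h3 : ((n:ℝ) / (∑ j, l j) * ⨆ j, l j) * (∑ j, l j) ≤ χstar * (∑ j, l j) :=
        mul_le_mul_of_nonneg_right hχw hL.le
      have h4 : χstar * (∑ j, l j) ≤ χstar * deff :=
        mul_le_mul_of_nonneg_left hLd hχ0
      linarith
  -- membership of 1 + χstar * deff
  have hmem : (1 + χstar * deff) ∈ {t : ℝ | ∀ (w : Fin p → ℝ) (i : Fin n),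
      (t • ((n : ℝ)⁻¹ • ((Matrix.of a)ᴴ * Matrix.diagonal (fun j => φ'' j (a j ⬝ᵥ w))
              * Matrix.of a) + ν • (1 : Matrix (Fin p) (Fin p) ℝ))
        - (φ'' i (a i ⬝ᵥ w) • vecMulVec (a i) (a i)
              + ν • (1 : Matrix (Fin p) (Fin p) ℝ))).PosSemidef} := by
    intro w i
    exact HDGlm.main_psd (B := B) a (fun j => φ'' j (a j ⬝ᵥ w)) (χstar * deff)
      hν hn hB (fun k => hφnn k _) i (hnl w i)
  by_cases hbdd : BddBelow {t : ℝ | ∀ (w : Fin p → ℝ) (i : Fin n),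
      (t • ((n : ℝ)⁻¹ • ((Matrix.of a)ᴴ * Matrix.diagonal (fun j => φ'' j (a j ⬝ᵥ w))
              * Matrix.of a) + ν • (1 : Matrix (Fin p) (Fin p) ℝ))
        - (φ'' i (a i ⬝ᵥ w) • vecMulVec (a i) (a i)
              + ν • (1 : Matrix (Fin p) (Fin p) ℝ))).PosSemidef}
  · exact csInf_le hbdd hmem
  · rw [Real.sInf_of_not_bddBelow hbdd]
    nlinarith [mul_nonneg hχ0 hdeff0]
end
end

section
/- Let F(w) = (1/n)∑ᵢ φᵢ(aᵢᵀw) + (ν/2)‖w‖² with each φᵢ twice differentiable convex, ν > 0. Then for any w and any i, λ₁((∇²f(w)+νI)^{−1/2}(∇²fᵢ(w)+νI)(∇²f(w)+νI)^{−1/2}) ≤ 1 + n·lᵢ^ν(Φ''(Aw)^{1/2}A), where fᵢ(w)=φᵢ(aᵢᵀw), ∇²f(w) = (1/n)AᵀΦ''(Aw)A. -/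
open Matrix

noncomputable section

private lemma isHermitian_smul_real {q : ℕ} (c : ℝ) {M : Matrix (Fin q) (Fin q) ℝ}
    (h : M.IsHermitian) : (c • M).IsHermitian := by
  unfold Matrix.IsHermitian at *
  rw [conjTranspose_smul, h, star_trivial]

/-- Per-term eigenvalue bound for GLM Hessians: for
`F(w) = (1/n)∑ᵢ φᵢ(aᵢᵀw) + (ν/2)‖w‖²`, for any `w` and any `i`,
`λ₁((∇²f(w)+νI)^{−1/2}(∇²fᵢ(w)+νI)(∇²f(w)+νI)^{−1/2}) ≤ 1 + n·lᵢ^ν(Φ''(Aw)^{1/2}A)`,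
where `∇²fᵢ(w) = φᵢ''(aᵢᵀw)aᵢaᵢᵀ`, `∇²f(w) = (1/n)AᵀΦ''(Aw)A`, and
`lᵢ^ν(Φ''(Aw)^{1/2}A) = φᵢ''(aᵢᵀw)·aᵢᵀ(AᵀΦ''(Aw)A + nνI)⁻¹aᵢ` is the `i`-th ridge leverage
score.  The eigenvalue bound is expressed in the equivalent Loewner-order form
`∇²fᵢ(w)+νI ⪯ (1 + n·lᵢ)·(∇²f(w)+νI)`. -/
theorem glm_hessian_term_eigenvalue_bound {n p : ℕ} (hn : 0 < n)
    (a : Fin n → Fin p → ℝ) (φ φ' φ'' : Fin n → ℝ → ℝ)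
    (hφ' : ∀ i x, HasDerivAt (φ i) (φ' i x) x)
    (hφ'' : ∀ i x, HasDerivAt (φ' i) (φ'' i x) x)
    (hφnn : ∀ i x, 0 ≤ φ'' i x)
    (ν : ℝ) (hν : 0 < ν) (w : Fin p → ℝ) (i : Fin n) :
    ((1 + (n : ℝ) * (φ'' i (a i ⬝ᵥ w) *
          (a i ⬝ᵥ ((Matrix.of a)ᴴ * Matrix.diagonal (fun j => φ'' j (a j ⬝ᵥ w)) * Matrix.of a
              + ((n : ℝ) * ν) • (1 : Matrix (Fin p) (Fin p) ℝ))⁻¹.mulVec (a i))))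
        • ((n : ℝ)⁻¹ • ((Matrix.of a)ᴴ * Matrix.diagonal (fun j => φ'' j (a j ⬝ᵥ w))
              * Matrix.of a) + ν • (1 : Matrix (Fin p) (Fin p) ℝ))
      - (φ'' i (a i ⬝ᵥ w) • vecMulVec (a i) (a i)
          + ν • (1 : Matrix (Fin p) (Fin p) ℝ))).PosSemidef := by
  set c := φ'' i (a i ⬝ᵥ w) with hc
  have hc0 : 0 ≤ c := hφnn _ _
  set A : Matrix (Fin n) (Fin p) ℝ := Matrix.of a with hA
  set D : Matrix (Fin n) (Fin n) ℝ := Matrix.diagonal (fun j => φ'' j (a j ⬝ᵥ w)) with hD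
  set M : Matrix (Fin p) (Fin p) ℝ := Aᴴ * D * A with hM
  set S : Matrix (Fin p) (Fin p) ℝ := M + ((n : ℝ) * ν) • 1 with hS
  have hDpsd : D.PosSemidef := Matrix.PosSemidef.diagonal (fun j => hφnn _ _)
  have hMpsd : M.PosSemidef := hDpsd.conjTranspose_mul_mul_same A
  have hnν : (0 : ℝ) < (n : ℝ) * ν :=
    mul_pos (by exact_mod_cast hn) hν
  have hIpd : (((n : ℝ) * ν) • (1 : Matrix (Fin p) (Fin p) ℝ)).PosDef := by
    rw [smul_one_eq_diagonal]
    exact posDef_diagonal_iff.mpr fun _ => hnν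
  have hSpd : S.PosDef := Matrix.PosDef.posSemidef_add hMpsd hIpd
  have hdet : IsUnit S.det := isUnit_iff_ne_zero.mpr hSpd.det_pos.ne'
  set u : Fin p → ℝ := S⁻¹ *ᵥ a i with hu
  have hSu : S *ᵥ u = a i := by
    rw [hu, mulVec_mulVec, Matrix.mul_nonsing_inv _ hdet, one_mulVec]
  obtain ⟨R, hRR, hRH⟩ : ∃ R : Matrix (Fin p) (Fin p) ℝ, R * R = S ∧ Rᴴ = R := by
    open scoped MatrixOrder in
    exact ⟨CFC.sqrt S, CFC.sqrt_mul_sqrt_self S hSpd.posSemidef.nonneg,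
      (CFC.sqrt_nonneg S).posSemidef.1⟩
  -- quadratic form of S factors through R
  have hq : ∀ y z : Fin p → ℝ, y ⬝ᵥ S *ᵥ z = (R *ᵥ y) ⬝ᵥ (R *ᵥ z) := by
    intro y z
    have hRT : Rᵀ = R := by
      ext j k
      have h3 := congrFun (congrFun hRH k) j
      simp only [Matrix.conjTranspose_apply, star_trivial] at h3
      simpa [Matrix.transpose_apply] using h3.symm
    rw [← hRR, ← mulVec_mulVec, dotProduct_mulVec y R]
    congr 1
    have h2 := mulVec_transpose R y
    rw [hRT] at h2
    exact h2.symm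
  -- Cauchy--Schwarz
  have hcs : ∀ y z : Fin p → ℝ, (y ⬝ᵥ z) ^ 2 ≤ (y ⬝ᵥ y) * (z ⬝ᵥ z) := by
    intro y z
    simpa [dotProduct, pow_two] using
      Finset.sum_mul_sq_le_sq_mul_sq Finset.univ y z
  rw [posSemidef_iff_dotProduct_mulVec]
  constructor
  · -- Hermitian
    have hvv : (vecMulVec (a i) (a i)).IsHermitian := by
      ext j k
      simp [Matrix.conjTranspose_apply, vecMulVec_apply, mul_comm]
    have hMH : M.IsHermitian := hMpsd.1
    exact (isHermitian_smul_real _ ((isHermitian_smul_real _ hMH).add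
        (isHermitian_smul_real _ Matrix.isHermitian_one))).sub
      ((isHermitian_smul_real _ hvv).add (isHermitian_smul_real _ Matrix.isHermitian_one))
  · intro x
    have hstar : (star x : Fin p → ℝ) = x := by simp
    rw [hstar]
    set ℓ : ℝ := c * (a i ⬝ᵥ u) with hℓ
    have hvv : (vecMulVec (a i) (a i)) *ᵥ x = (a i ⬝ᵥ x) • a i := by
      ext j
      simp [mulVec, vecMulVec_apply, dotProduct, Finset.mul_sum, mul_comm, mul_assoc,
        mul_left_comm]
    have hax : a i ⬝ᵥ x = (R *ᵥ u) ⬝ᵥ (R *ᵥ x) := by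
      rw [← hSu, dotProduct_comm, hq x u, dotProduct_comm]
    have hau : a i ⬝ᵥ u = (R *ᵥ u) ⬝ᵥ (R *ᵥ u) := by
      rw [← hSu, dotProduct_comm, hq u u]
    have key : c * (a i ⬝ᵥ x) ^ 2 ≤ ℓ * (x ⬝ᵥ S *ᵥ x) := by
      rw [hℓ, hax, hau, hq x x, mul_assoc]
      exact mul_le_mul_of_nonneg_left (hcs _ _) hc0
    have hxMx : 0 ≤ x ⬝ᵥ M *ᵥ x := by simpa using hMpsd.dotProduct_mulVec_nonneg x
    have hxx : 0 ≤ x ⬝ᵥ x := by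
      simpa [dotProduct] using Finset.sum_nonneg fun j _ => mul_self_nonneg (x j)
    have hSx : x ⬝ᵥ S *ᵥ x = x ⬝ᵥ M *ᵥ x + ((n : ℝ) * ν) * (x ⬝ᵥ x) := by
      rw [hS, add_mulVec, dotProduct_add, smul_mulVec, one_mulVec, dotProduct_smul,
        smul_eq_mul]
    have hnpos : (0 : ℝ) < (n : ℝ) := by exact_mod_cast hn
    have hninv : (n : ℝ) * (n : ℝ)⁻¹ = 1 := mul_inv_cancel₀ hnpos.ne'
    have expand :
        x ⬝ᵥ (((1 + (n : ℝ) * ℓ) • ((n : ℝ)⁻¹ • M + ν • 1)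
            - (c • vecMulVec (a i) (a i) + ν • 1)) *ᵥ x)
          = (1 + (n : ℝ) * ℓ) * ((n : ℝ)⁻¹ * (x ⬝ᵥ M *ᵥ x) + ν * (x ⬝ᵥ x))
            - (c * (a i ⬝ᵥ x) ^ 2 + ν * (x ⬝ᵥ x)) := by
      rw [sub_mulVec, dotProduct_sub, add_mulVec, dotProduct_add, smul_mulVec,
        add_mulVec, smul_mulVec, smul_mulVec, one_mulVec, smul_mulVec,
        hvv]
      simp only [dotProduct_add, dotProduct_smul, smul_eq_mul, smul_dotProduct]
      ring_nf
      rw [dotProduct_comm (a i) x]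
      ring
    rw [expand]
    have hne : (n : ℝ) ≠ 0 := hnpos.ne'
    have hid : (1 + (n : ℝ) * ℓ) * ((n : ℝ)⁻¹ * (x ⬝ᵥ M *ᵥ x) + ν * (x ⬝ᵥ x))
          - (c * (a i ⬝ᵥ x) ^ 2 + ν * (x ⬝ᵥ x))
        = (n : ℝ)⁻¹ * (x ⬝ᵥ M *ᵥ x)
          + (ℓ * (x ⬝ᵥ M *ᵥ x + (n : ℝ) * ν * (x ⬝ᵥ x)) - c * (a i ⬝ᵥ x) ^ 2) := by
      field_simp
      ring
    rw [hid]
    have hkey2 := key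
    rw [hSx] at hkey2
    have h1 : 0 ≤ (n : ℝ)⁻¹ * (x ⬝ᵥ M *ᵥ x) := mul_nonneg (inv_nonneg.mpr hnpos.le) hxMx
    linarith
end
end

section
/- Let F : ℝ^p → ℝ be twice differentiable, μ-strongly convex with M-Lipschitz Hessian, and suppose w, w', w'', and the minimizer w⋆ all lie in the ball B(w, εμ/(2M)) for some ε ∈ (0,1), where w'' = w' − (1/(1+ε))∇²F(w)⁻¹∇F(w'). Then F(w'') − F(w⋆) ≤ (1 − 1/(1+ε)²)(F(w') − F(w⋆)). -/
open Matrix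

noncomputable section

lemma euclNorm_eq_norm {p : ℕ} (v : Fin p → ℝ) :
    euclNorm v = ‖(WithLp.equiv 2 (Fin p → ℝ)).symm v‖ := by
  rw [EuclideanSpace.norm_eq]
  unfold euclNorm
  congr 1
  simp [dotProduct, Real.norm_eq_abs, sq_abs, sq]

lemma euclNorm_add_le {p : ℕ} (a b : Fin p → ℝ) :
    euclNorm (a + b) ≤ euclNorm a + euclNorm b := by
  simp only [euclNorm_eq_norm, WithLp.equiv_symm_apply, WithLp.toLp_add]
  exact norm_add_le _ _

lemma euclNorm_smul {p : ℕ} (t : ℝ) (a : Fin p → ℝ) :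
    euclNorm (t • a) = |t| * euclNorm a := by
  simp only [euclNorm_eq_norm, WithLp.equiv_symm_apply, WithLp.toLp_smul]
  rw [norm_smul, Real.norm_eq_abs]

lemma taylor_upper_aux (f f' f'' : ℝ → ℝ) (c : ℝ)
    (h1 : ∀ t, HasDerivAt f (f' t) t)
    (h2 : ∀ t, HasDerivAt f' (f'' t) t)
    (hb : ∀ t ∈ Set.Icc (0:ℝ) 1, f'' t ≤ c) :
    f 1 ≤ f 0 + f' 0 + c / 2 := by
  set q : ℝ → ℝ := fun t => f' t - (f' 0 + c * t) with hqdef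
  have hqd : ∀ t, HasDerivAt q (f'' t - c) t := by
    intro t
    have h3 : HasDerivAt (fun t : ℝ => f' 0 + c * t) c t := by
      simpa using ((hasDerivAt_id t).const_mul c).const_add (f' 0)
    exact (h2 t).sub h3
  have hq0 : q 0 = 0 := by simp [hqdef]
  have hqle : ∀ t ∈ Set.Icc (0:ℝ) 1, q t ≤ 0 := by
    have hanti : AntitoneOn q (Set.Icc 0 1) := by
      apply antitoneOn_of_deriv_nonpos (convex_Icc 0 1)
      · exact fun x _ => (hqd x).continuousAt.continuousWithinAt
      · exact fun x _ => (hqd x).differentiableAt.differentiableWithinAt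
      · intro x hx
        rw [(hqd x).deriv]
        rw [interior_Icc] at hx
        have := hb x (Set.mem_Icc_of_Ioo hx)
        linarith
    intro t ht
    have := hanti (Set.left_mem_Icc.2 one_pos.le) ht ht.1
    simpa [hq0] using this
  set h : ℝ → ℝ := fun t => f t - (f 0 + t * f' 0 + c * t ^ 2 / 2) with hhdef
  have hhd : ∀ t, HasDerivAt h (q t) t := by
    intro t
    have a1 : HasDerivAt (fun t : ℝ => t * f' 0) (f' 0) t := by
      simpa using (hasDerivAt_id t).mul_const (f' 0)
    have a2 : HasDerivAt (fun t : ℝ => c * t ^ 2 / 2) (c * t) t := by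
      have := ((hasDerivAt_pow 2 t).const_mul c).div_const 2
      convert this using 1
      · rfl
      · rfl
      · ring
    have h4 : HasDerivAt (fun t : ℝ => f 0 + t * f' 0 + c * t ^ 2 / 2) (f' 0 + c * t) t :=
      (a1.const_add (f 0)).add a2
    exact (h1 t).sub h4
  have hanti : AntitoneOn h (Set.Icc 0 1) := by
    apply antitoneOn_of_deriv_nonpos (convex_Icc 0 1)
    · exact fun x _ => (hhd x).continuousAt.continuousWithinAt
    · exact fun x _ => (hhd x).differentiableAt.differentiableWithinAt
    · intro x hx
      rw [(hhd x).deriv]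
      rw [interior_Icc] at hx
      exact hqle x (Set.mem_Icc_of_Ioo hx)
  have := hanti (Set.left_mem_Icc.2 one_pos.le) (Set.right_mem_Icc.2 one_pos.le) one_pos.le
  simp only [hhdef] at this
  linarith [this]

lemma taylor_lower_aux (f f' f'' : ℝ → ℝ) (c : ℝ)
    (h1 : ∀ t, HasDerivAt f (f' t) t)
    (h2 : ∀ t, HasDerivAt f' (f'' t) t)
    (hb : ∀ t ∈ Set.Icc (0:ℝ) 1, c ≤ f'' t) :
    f 0 + f' 0 + c / 2 ≤ f 1 := by
  have := taylor_upper_aux (fun t => -f t) (fun t => -f' t) (fun t => -f'' t) (-c)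
    (fun t => (h1 t).neg) (fun t => (h2 t).neg)
    (fun t ht => by simpa using hb t ht)
  linarith

/-- One-step improvement for lazy Newton's method: if `F` is `μ`-strongly convex with
`M`-Lipschitz Hessian, and `w, w', w'', w⋆` all lie in the ball `B(w, εμ/(2M))` with `w⋆` the
minimizer and `w'' = w' − (1/(1+ε))∇²F(w)⁻¹∇F(w')`, then
`F(w'') − F(w⋆) ≤ (1 − 1/(1+ε)²)(F(w') − F(w⋆))`. -/
theorem lazy_newton_one_step {p : ℕ}
    (F : (Fin p → ℝ) → ℝ) (g : (Fin p → ℝ) → Fin p → ℝ)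
    (H : (Fin p → ℝ) → Matrix (Fin p) (Fin p) ℝ)
    (hgrad : ∀ x, ∃ f' : (Fin p → ℝ) →L[ℝ] ℝ, HasFDerivAt F f' x ∧ ∀ v, f' v = g x ⬝ᵥ v)
    (hhess : ∀ x, ∃ g' : (Fin p → ℝ) →L[ℝ] (Fin p → ℝ),
      HasFDerivAt g g' x ∧ ∀ v, g' v = (H x).mulVec v)
    (μ M ε : ℝ) (hμ : 0 < μ) (hM : 0 < M) (hε0 : 0 < ε) (hε1 : ε < 1)
    (hsc : ∀ x, (H x - μ • (1 : Matrix (Fin p) (Fin p) ℝ)).PosSemidef)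
    (hLip : ∀ x y,
      ((M * euclNorm (x - y)) • (1 : Matrix (Fin p) (Fin p) ℝ) - (H x - H y)).PosSemidef ∧
      ((H x - H y) + (M * euclNorm (x - y)) • (1 : Matrix (Fin p) (Fin p) ℝ)).PosSemidef)
    (w w' w'' wstar : Fin p → ℝ)
    (hmin : ∀ y, F wstar ≤ F y)
    (hball' : euclNorm (w' - w) ≤ ε * μ / (2 * M))
    (hball'' : euclNorm (w'' - w) ≤ ε * μ / (2 * M))
    (hballstar : euclNorm (wstar - w) ≤ ε * μ / (2 * M))
    (hstep : w'' = w' - (1 / (1 + ε)) • (H w)⁻¹.mulVec (g w')) :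
    F w'' - F wstar ≤ (1 - 1 / (1 + ε) ^ 2) * (F w' - F wstar) := by
  classical
  have hε1' : (0:ℝ) < 1 + ε := by linarith
  set r : ℝ := ε * μ / (2 * M) with hr
  set t1 : ℝ := 1 / (1 + ε) with ht1
  have ht1e : t1 * (1 + ε) = 1 := by
    rw [ht1]; field_simp
  have ht1pos : 0 < t1 := by rw [ht1]; positivity
  -- basic facts about dot products
  have hds : ∀ v : Fin p → ℝ, 0 ≤ v ⬝ᵥ v :=
    fun v => Finset.sum_nonneg fun i _ => mul_self_nonneg _
  have hpsd : ∀ (S : Matrix (Fin p) (Fin p) ℝ), S.PosSemidef →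
      ∀ x : Fin p → ℝ, 0 ≤ x ⬝ᵥ S *ᵥ x := by
    intro S hS x
    simpa using hS.dotProduct_mulVec_nonneg x
  -- strong convexity quadratic bound
  have hscq : ∀ x v, μ * (v ⬝ᵥ v) ≤ v ⬝ᵥ H x *ᵥ v := by
    intro x v
    have := hpsd _ (hsc x) v
    simp only [sub_mulVec, smul_mulVec, one_mulVec, dotProduct_sub, dotProduct_smul,
      smul_eq_mul] at this
    linarith
  -- Lipschitz quadratic bounds
  have hlip1 : ∀ x y v, v ⬝ᵥ H x *ᵥ v - v ⬝ᵥ H y *ᵥ v ≤ M * euclNorm (x - y) * (v ⬝ᵥ v) := by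
    intro x y v
    have := hpsd _ (hLip x y).1 v
    simp only [sub_mulVec, smul_mulVec, one_mulVec, dotProduct_sub, dotProduct_smul,
      smul_eq_mul] at this
    linarith
  have hlip2 : ∀ x y v, -(M * euclNorm (x - y) * (v ⬝ᵥ v)) ≤ v ⬝ᵥ H x *ᵥ v - v ⬝ᵥ H y *ᵥ v := by
    intro x y v
    have := hpsd _ (hLip x y).2 v
    simp only [add_mulVec, sub_mulVec, smul_mulVec, one_mulVec, dotProduct_add,
      dotProduct_sub, dotProduct_smul, smul_eq_mul] at this
    linarith
  have hQpos : ∀ v, 0 ≤ v ⬝ᵥ H w *ᵥ v :=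
    fun v => le_trans (mul_nonneg hμ.le (hds v)) (hscq w v)
  -- sandwich bounds on the ball
  have hsand : ∀ x, euclNorm (x - w) ≤ r → ∀ v,
      (v ⬝ᵥ H w *ᵥ v ≤ (1 + ε) * (v ⬝ᵥ H x *ᵥ v)) ∧
      (v ⬝ᵥ H x *ᵥ v ≤ (1 + ε) * (v ⬝ᵥ H w *ᵥ v)) := by
    intro x hx v
    have e0 : 0 ≤ euclNorm (x - w) := Real.sqrt_nonneg _
    have h1 := hlip1 x w v
    have h2 := hlip2 x w v
    have hMr : M * euclNorm (x - w) * (v ⬝ᵥ v) ≤ (ε * μ / 2) * (v ⬝ᵥ v) := by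
      apply mul_le_mul_of_nonneg_right _ (hds v)
      calc M * euclNorm (x - w) ≤ M * r := mul_le_mul_of_nonneg_left hx hM.le
        _ = ε * μ / 2 := by rw [hr]; field_simp
    have hμQ := hscq w v
    have hQ0 := hQpos v
    have hεμ : ε * μ / 2 * (v ⬝ᵥ v) ≤ (ε / 2) * (v ⬝ᵥ H w *ᵥ v) := by
      have := mul_le_mul_of_nonneg_left hμQ (le_of_lt (half_pos hε0))
      nlinarith
    constructor
    · nlinarith [hds v]
    · nlinarith [hds v]
  -- convexity of the ball along segments
  have hseg : ∀ x y : Fin p → ℝ, euclNorm (x - w) ≤ r → euclNorm (y - w) ≤ r →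
      ∀ t ∈ Set.Icc (0:ℝ) 1, euclNorm (x + t • (y - x) - w) ≤ r := by
    intro x y hx hy t ht
    have hco : x + t • (y - x) - w = (1 - t) • (x - w) + t • (y - w) := by
      ext i
      simp only [Pi.add_apply, Pi.sub_apply, Pi.smul_apply, smul_eq_mul]
      ring
    rw [hco]
    have h1 : euclNorm ((1 - t) • (x - w) + t • (y - w)) ≤
        euclNorm ((1 - t) • (x - w)) + euclNorm (t • (y - w)) := euclNorm_add_le _ _
    rw [euclNorm_smul, euclNorm_smul, abs_of_nonneg (by linarith [ht.2]),
      abs_of_nonneg ht.1] at h1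
    have e0 : 0 ≤ euclNorm (x - w) := Real.sqrt_nonneg _
    have e1 : 0 ≤ euclNorm (y - w) := Real.sqrt_nonneg _
    nlinarith [ht.1, ht.2, mul_le_mul_of_nonneg_left hx (by linarith [ht.2] : (0:ℝ) ≤ 1 - t),
      mul_le_mul_of_nonneg_left hy ht.1]
  -- Taylor-type quadratic regularity bounds
  have key : ∀ x y : Fin p → ℝ, euclNorm (x - w) ≤ r → euclNorm (y - w) ≤ r →
      (F y ≤ F x + g x ⬝ᵥ (y - x) + ((1 + ε) * ((y - x) ⬝ᵥ H w *ᵥ (y - x))) / 2) ∧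
      (F x + g x ⬝ᵥ (y - x) + (t1 * ((y - x) ⬝ᵥ H w *ᵥ (y - x))) / 2 ≤ F y) := by
    intro x y hx hy
    set d : Fin p → ℝ := y - x with hd
    set L : ℝ → (Fin p → ℝ) := fun t => x + t • d with hL
    have hLd : ∀ t : ℝ, HasDerivAt L d t := by
      intro t
      have : HasDerivAt (fun s : ℝ => s • d) ((1:ℝ) • d) t := (hasDerivAt_id t).smul_const d
      simpa [hL] using this.const_add x
    have hφ1 : ∀ t : ℝ, HasDerivAt (fun s => F (L s)) (g (L t) ⬝ᵥ d) t := by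
      intro t
      obtain ⟨f', hf, hfv⟩ := hgrad (L t)
      have hc := hf.comp_hasDerivAt t (hLd t)
      rw [hfv d] at hc
      exact hc
    have hφ2 : ∀ t : ℝ, HasDerivAt (fun s => g (L s) ⬝ᵥ d) (d ⬝ᵥ H (L t) *ᵥ d) t := by
      intro t
      obtain ⟨g', hg, hgv⟩ := hhess (L t)
      have hcomp : HasDerivAt (fun s => g (L s)) (g' d) t := hg.comp_hasDerivAt t (hLd t)
      have hcomp' : ∀ i, HasDerivAt (fun s => g (L s) i) (g' d i) t := hasDerivAt_pi.1 hcomp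
      have hsum : HasDerivAt (fun s => ∑ i, g (L s) i * d i) (∑ i, g' d i * d i) t :=
        HasDerivAt.fun_sum (fun i _ => (hcomp' i).mul_const (d i))
      have heq : (∑ i, g' d i * d i) = d ⬝ᵥ H (L t) *ᵥ d := by
        rw [hgv d]
        exact dotProduct_comm _ _
      rw [← heq]
      exact hsum
    have hmem : ∀ t ∈ Set.Icc (0:ℝ) 1, euclNorm (L t - w) ≤ r := fun t ht => hseg x y hx hy t ht
    have h0 : L 0 = x := by simp [hL]
    have h1 : L 1 = y := by simp [hL, hd]
    constructor
    · have hub : ∀ t ∈ Set.Icc (0:ℝ) 1,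
          d ⬝ᵥ H (L t) *ᵥ d ≤ (1 + ε) * (d ⬝ᵥ H w *ᵥ d) :=
        fun t ht => (hsand (L t) (hmem t ht) d).2
      have := taylor_upper_aux (fun s => F (L s)) (fun s => g (L s) ⬝ᵥ d)
        (fun s => d ⬝ᵥ H (L s) *ᵥ d) ((1 + ε) * (d ⬝ᵥ H w *ᵥ d)) hφ1 hφ2 hub
      simp only [h0, h1] at this
      exact this
    · have hlb : ∀ t ∈ Set.Icc (0:ℝ) 1,
          t1 * (d ⬝ᵥ H w *ᵥ d) ≤ d ⬝ᵥ H (L t) *ᵥ d := by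
        intro t ht
        have h2 := (hsand (L t) (hmem t ht) d).1
        have h3 : t1 * (d ⬝ᵥ H w *ᵥ d) ≤ t1 * ((1 + ε) * (d ⬝ᵥ H (L t) *ᵥ d)) :=
          mul_le_mul_of_nonneg_left h2 ht1pos.le
        calc t1 * (d ⬝ᵥ H w *ᵥ d) ≤ t1 * ((1 + ε) * (d ⬝ᵥ H (L t) *ᵥ d)) := h3
          _ = (t1 * (1 + ε)) * (d ⬝ᵥ H (L t) *ᵥ d) := by ring
          _ = d ⬝ᵥ H (L t) *ᵥ d := by rw [ht1e, one_mul]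
      have := taylor_lower_aux (fun s => F (L s)) (fun s => g (L s) ⬝ᵥ d)
        (fun s => d ⬝ᵥ H (L s) *ᵥ d) (t1 * (d ⬝ᵥ H w *ᵥ d)) hφ1 hφ2 hlb
      simp only [h0, h1] at this
      exact this
  -- the Hessian at w is symmetric and invertible
  have hAh : (H w).IsHermitian := by
    have h1 := (hsc w).1
    have h2 : (μ • (1 : Matrix (Fin p) (Fin p) ℝ)).IsHermitian := by
      simp [Matrix.IsHermitian]
    have := h1.add h2
    simpa using this
  have hsym : ∀ a b : Fin p → ℝ, a ⬝ᵥ H w *ᵥ b = b ⬝ᵥ H w *ᵥ a := by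
    intro a b
    rw [dotProduct_mulVec, ← mulVec_transpose, show (H w)ᵀ = H w from hAh]
    exact dotProduct_comm _ _
  have hApd : (H w).PosDef := by
    refine Matrix.PosDef.of_dotProduct_mulVec_pos hAh fun v hv => ?_
    have h1 : 0 < v ⬝ᵥ v := by
      rcases (hds v).lt_or_eq with h | h
      · exact h
      · exact absurd (dotProduct_self_eq_zero.mp h.symm) hv
    have h2 := hscq w v
    have : 0 < v ⬝ᵥ H w *ᵥ v := lt_of_lt_of_le (by positivity) h2
    simpa using this
  have hdet : IsUnit (H w).det := isUnit_iff_ne_zero.2 hApd.det_pos.ne'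
  set u : Fin p → ℝ := (H w)⁻¹.mulVec (g w') with hu
  have hAinv : H w *ᵥ u = g w' := by
    rw [hu, mulVec_mulVec, Matrix.mul_nonsing_inv _ hdet, one_mulVec]
  set T : ℝ := g w' ⬝ᵥ u with hT
  have hQu : u ⬝ᵥ H w *ᵥ u = T := by
    rw [hAinv, hT, dotProduct_comm]
  -- step direction
  have hd'' : w'' - w' = -(t1 • u) := by
    rw [hstep]; abel
  -- upper bound: F w'' ≤ F w' - t1 * T / 2, in cleared form
  have hU : T ≤ 2 * (1 + ε) * (F w' - F w'') := by
    have h := (key w' w'' hball' hball'').1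
    have e1 : g w' ⬝ᵥ (w'' - w') = -(t1 * T) := by
      rw [hd'', hT]
      simp [dotProduct_smul, smul_eq_mul]
    have e2 : (w'' - w') ⬝ᵥ H w *ᵥ (w'' - w') = t1 ^ 2 * T := by
      rw [hd'']
      rw [mulVec_neg, dotProduct_neg, neg_dotProduct, neg_neg, mulVec_smul, dotProduct_smul,
        smul_dotProduct, smul_eq_mul, smul_eq_mul, hQu]
      ring
    rw [e1, e2] at h
    have h7 := mul_le_mul_of_nonneg_left h hε1'.le
    have e4 : (1 + ε) * (t1 * T) = T := by
      calc (1 + ε) * (t1 * T) = (t1 * (1 + ε)) * T := by ring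
        _ = T := by rw [ht1e, one_mul]
    have e5 : (1 + ε) * ((1 + ε) * (t1 ^ 2 * T)) = T := by
      calc (1 + ε) * ((1 + ε) * (t1 ^ 2 * T)) = (t1 * (1 + ε)) * (t1 * (1 + ε)) * T := by ring
        _ = T := by rw [ht1e]; ring
    linarith [h7, e4, e5]
  -- lower bound via completing the square
  have hLw : 2 * (F w' - F wstar) ≤ (1 + ε) * T := by
    have h := (key w' wstar hball' hballstar).2
    set ds : Fin p → ℝ := wstar - w' with hds'
    set z : Fin p → ℝ := ds + (1 + ε) • u with hz
    have hcross : ds ⬝ᵥ H w *ᵥ u = g w' ⬝ᵥ ds := by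
      rw [hAinv, dotProduct_comm]
    have hcross2 : u ⬝ᵥ H w *ᵥ ds = g w' ⬝ᵥ ds := by
      rw [hsym u ds, hcross]
    have hexp : z ⬝ᵥ H w *ᵥ z =
        ds ⬝ᵥ H w *ᵥ ds + 2 * (1 + ε) * (g w' ⬝ᵥ ds) + (1 + ε) ^ 2 * T := by
      rw [hz]
      simp only [mulVec_add, mulVec_smul, dotProduct_add, add_dotProduct, dotProduct_smul,
        smul_dotProduct, smul_eq_mul, hcross, hcross2, hQu]
      ring
    have hcsq : 0 ≤ ds ⬝ᵥ H w *ᵥ ds + 2 * (1 + ε) * (g w' ⬝ᵥ ds) + (1 + ε) ^ 2 * T := by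
      rw [← hexp]; exact hQpos z
    -- multiply h by 2(1+ε) and combine
    have h8 := mul_le_mul_of_nonneg_left h (by positivity : (0:ℝ) ≤ 2 * (1 + ε))
    have e6 : 2 * (1 + ε) * (t1 * (ds ⬝ᵥ H w *ᵥ ds) / 2) = ds ⬝ᵥ H w *ᵥ ds := by
      calc 2 * (1 + ε) * (t1 * (ds ⬝ᵥ H w *ᵥ ds) / 2)
          = (t1 * (1 + ε)) * (ds ⬝ᵥ H w *ᵥ ds) := by ring
        _ = ds ⬝ᵥ H w *ᵥ ds := by rw [ht1e, one_mul]
    have h9 : (1 + ε) * (2 * (F w' - F wstar)) ≤ (1 + ε) * ((1 + ε) * T) := by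
      linarith [h8, e6, hcsq]
    exact le_of_mul_le_mul_left h9 hε1'
  -- combine
  have hΔ : 0 ≤ F w' - F wstar := sub_nonneg.2 (hmin w')
  have h10 := mul_le_mul_of_nonneg_left hU hε1'.le
  have hA1 : F w' - F wstar ≤ (1 + ε) ^ 2 * (F w' - F w'') := by linarith [hLw, h10]
  have hfin : (F w'' - F wstar) * (1 + ε) ^ 2 ≤ ((1 + ε) ^ 2 - 1) * (F w' - F wstar) := by
    linarith [hA1]
  have hc2 : (0:ℝ) < (1 + ε) ^ 2 := by positivity
  rw [show (1:ℝ) - 1 / (1 + ε) ^ 2 = ((1 + ε) ^ 2 - 1) / (1 + ε) ^ 2 by field_simp]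
  rw [div_mul_eq_mul_div, le_div_iff₀ hc2]
  exact hfin
end
end

section
/- Suppose F : ℝ^p → ℝ is differentiable and satisfies, for some symmetric positive definite P, ε > 0, ζ ∈ (0,1): F(y) ≤ F(x) + ⟨∇F(x), y−x⟩ + ((1+ζ)(1+ε)/2)‖y−x‖_P² and F(y) ≥ F(x) + ⟨∇F(x), y−x⟩ + ((1−ζ)/(2(1+ε)))‖y−x‖_P² for all x, y in a set containing w', w'' := w' − (1/((1+ζ)(1+ε)))P⁻¹∇F(w'), and the minimizer w⋆. Then F(w'') − F(w⋆) ≤ (1 − ((1−ζ)/(1+ζ))·(1/(1+ε)²))(F(w') − F(w⋆)). -/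
open Matrix

noncomputable section

/-- One-step improvement for approximate, lazy Newton's method: if on a set `S` containing
`w'`, `w'' = w' − (1/((1+ζ)(1+ε)))P⁻¹∇F(w')` and the minimizer `w⋆`, `F` satisfies
`F(y) ≤ F(x) + ⟨∇F(x), y−x⟩ + ((1+ζ)(1+ε)/2)‖y−x‖_P²` and
`F(y) ≥ F(x) + ⟨∇F(x), y−x⟩ + ((1−ζ)/(2(1+ε)))‖y−x‖_P²`, then
`F(w'') − F(w⋆) ≤ (1 − ((1−ζ)/(1+ζ))·(1/(1+ε)²))(F(w') − F(w⋆))`. -/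
theorem approx_lazy_newton_one_step {p : ℕ}
    (P : Matrix (Fin p) (Fin p) ℝ) (hP : P.PosDef)
    (ε ζ : ℝ) (hε : 0 < ε) (hζ0 : 0 < ζ) (hζ1 : ζ < 1)
    (S : Set (Fin p → ℝ))
    (F : (Fin p → ℝ) → ℝ) (g : (Fin p → ℝ) → Fin p → ℝ)
    (hgrad : ∀ x, ∃ f' : (Fin p → ℝ) →L[ℝ] ℝ, HasFDerivAt F f' x ∧ ∀ v, f' v = g x ⬝ᵥ v)
    (hupper : ∀ x ∈ S, ∀ y ∈ S,
      F y ≤ F x + g x ⬝ᵥ (y - x) + (1 + ζ) * (1 + ε) / 2 * quadForm P (y - x))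
    (hlower : ∀ x ∈ S, ∀ y ∈ S,
      F y ≥ F x + g x ⬝ᵥ (y - x) + (1 - ζ) / (2 * (1 + ε)) * quadForm P (y - x))
    (w' w'' wstar : Fin p → ℝ) (hw' : w' ∈ S) (hw'' : w'' ∈ S) (hwstar : wstar ∈ S)
    (hmin : ∀ y, F wstar ≤ F y)
    (hstep : w'' = w' - (1 / ((1 + ζ) * (1 + ε))) • P⁻¹.mulVec (g w')) :
    F w'' - F wstar ≤ (1 - (1 - ζ) / (1 + ζ) * (1 / (1 + ε) ^ 2)) * (F w' - F wstar) := by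

  -- abbreviations
  set c : ℝ := (1 + ζ) * (1 + ε) with hc
  set d : ℝ := (1 - ζ) / (1 + ε) with hd
  have hcpos : 0 < c := by positivity
  have hdpos : 0 < d := by
    have : 0 < 1 - ζ := by linarith
    positivity
  have hPsymm : Pᵀ = P := by simpa using hP.1.eq
  have hPdet : IsUnit P.det := isUnit_iff_ne_zero.mpr (ne_of_gt hP.det_pos)
  set v0 : Fin p → ℝ := P⁻¹.mulVec (g w') with hv0
  have hPv0 : P.mulVec v0 = g w' := by
    rw [hv0, Matrix.mulVec_mulVec, Matrix.mul_nonsing_inv _ hPdet, Matrix.one_mulVec]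
  have hsymmdot : ∀ u v : Fin p → ℝ, u ⬝ᵥ P.mulVec v = v ⬝ᵥ P.mulVec u := by
    intro u v
    rw [Matrix.dotProduct_mulVec, ← Matrix.mulVec_transpose, hPsymm, dotProduct_comm]
  set Q : ℝ := g w' ⬝ᵥ v0 with hQ
  -- quadForm of v0
  have hqv0 : quadForm P v0 = Q := by
    rw [quadForm, hPv0, dotProduct_comm, hQ]
  -- upper bound step
  have hdiff : w'' - w' = -(1 / c) • v0 := by
    rw [hstep]; ext i; simp [neg_smul]
  have hdot1 : g w' ⬝ᵥ (w'' - w') = -(1 / c) * Q := by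
    rw [hdiff, dotProduct_smul, hQ]; simp
  have hquad1 : quadForm P (w'' - w') = (1 / c) ^ 2 * Q := by
    rw [hdiff, quadForm, Matrix.mulVec_smul, smul_dotProduct, dotProduct_smul,
      ← hqv0, quadForm]
    simp only [smul_eq_mul]; ring
  have hupp := hupper w' hw' w'' hw''
  rw [hdot1, hquad1] at hupp
  have hupp' : F w'' ≤ F w' - 1 / (2 * c) * Q := by
    have : (1 + ζ) * (1 + ε) / 2 * ((1 / c) ^ 2 * Q) = 1 / (2 * c) * Q := by
      rw [hc]; field_simp
    rw [this] at hupp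
    have h2 : -(1 / c) * Q + 1 / (2 * c) * Q = -(1 / (2 * c) * Q) := by
      field_simp; ring
    linarith
  -- lower bound step with y = wstar
  set u : Fin p → ℝ := wstar - w' with hu
  have hlow := hlower w' hw' wstar hwstar
  rw [← hu] at hlow
  -- quadratic expansion: 0 ≤ quadForm P (u + (1/d) • v0)
  have hexp : quadForm P (u + (1 / d) • v0)
      = quadForm P u + (2 / d) * (g w' ⬝ᵥ u) + (1 / d) ^ 2 * Q := by
    rw [quadForm, Matrix.mulVec_add, Matrix.mulVec_smul, add_dotProduct,
      smul_dotProduct, dotProduct_add, dotProduct_smul,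
      dotProduct_add, dotProduct_smul]
    have h1 : v0 ⬝ᵥ P.mulVec u = g w' ⬝ᵥ u := by
      rw [hsymmdot, hPv0, dotProduct_comm]
    have h2 : u ⬝ᵥ P.mulVec v0 = g w' ⬝ᵥ u := by rw [hPv0, dotProduct_comm]
    have h3 : v0 ⬝ᵥ P.mulVec v0 = Q := by rw [← quadForm, hqv0]
    rw [h1, h2, h3, ← quadForm]
    simp only [smul_eq_mul]; ring
  have hpsd : 0 ≤ quadForm P (u + (1 / d) • v0) := by
    rcases eq_or_ne (u + (1 / d) • v0) 0 with h | h
    · rw [quadForm, h]; simp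
    · exact le_of_lt (by simpa [quadForm] using hP.dotProduct_mulVec_pos h)
  rw [hexp] at hpsd
  -- derive gᵀu + (d/2) quadForm P u ≥ -(1/(2d)) Q
  have hlow2 : -(1 / (2 * d)) * Q ≤ g w' ⬝ᵥ u + d / 2 * quadForm P u := by
    have h := mul_le_mul_of_nonneg_left hpsd (le_of_lt (half_pos hdpos))
    have e1 : d / 2 * (quadForm P u + (2 / d) * (g w' ⬝ᵥ u) + (1 / d) ^ 2 * Q)
        = d / 2 * quadForm P u + g w' ⬝ᵥ u + 1 / (2 * d) * Q := by
      field_simp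
    rw [mul_zero, e1] at h
    linarith
  have hdcoef : (1 - ζ) / (2 * (1 + ε)) = d / 2 := by rw [hd, div_div, mul_comm]
  rw [hdcoef] at hlow
  have hQge : 2 * d * (F w' - F wstar) ≤ Q := by
    have h1 : F w' - F wstar ≤ 1 / (2 * d) * Q := by linarith
    have h2d : (0:ℝ) < 2 * d := by linarith
    have h := mul_le_mul_of_nonneg_left h1 h2d.le
    have e : 2 * d * (1 / (2 * d) * Q) = Q := by field_simp
    rw [e] at h
    exact h
  -- combine
  have hFge : 0 ≤ F w' - F wstar := by linarith [hmin w']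
  have hkey : F w'' - F wstar ≤ (F w' - F wstar) - 1 / (2 * c) * Q := by linarith
  have hmono : d / c * (F w' - F wstar) ≤ 1 / (2 * c) * Q := by
    have h := mul_le_mul_of_nonneg_left hQge (le_of_lt (by positivity : (0:ℝ) < 1 / (2 * c)))
    calc d / c * (F w' - F wstar) = 1 / (2 * c) * (2 * d * (F w' - F wstar)) := by
          field_simp
      _ ≤ 1 / (2 * c) * Q := h
  have hcoef : 1 - (1 - ζ) / (1 + ζ) * (1 / (1 + ε) ^ 2) = 1 - d / c := by
    rw [hd, hc]; field_simp
  rw [hcoef, sub_mul, one_mul]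
  linarith
end
end
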